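/- arXiv:0806.4111 — 3 statements merged into one kernel-verified Lean document; each statement's English description precedes it below -/
import Mathlib

section
/- If X and Y are path-connected metrizable spaces (or CW-complexes), then TC(X × Y) ≤ TC(X) + TC(Y) − 1. -/
open unitInterval ContinuousMap

/-- `HasMotionCover X k`: `X × X` admits a cover by `k` open subsets, on each of which
the path fibration `π : PX → X × X`, `π γ = (γ 0, γ 1)`, admits a continuous section. -/
def HasMotionCover (X : Type*) [TopologicalSpace X] (k : ℕ) : Prop :=
  ∃ U : Fin k → Set (X × X),
    (∀ i, IsOpen (U i)) ∧ (⋃ i, U i) = Set.univ ∧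
    ∀ i, ∃ s : C((U i : Set (X × X)), C(I, X)),
      ∀ p : U i, ((s p) 0, (s p) 1) = (p : X × X)

/-- The topological complexity of `X`: the minimal number `k` such that `X × X` admits a
cover by `k` open subsets over each of which the path fibration admits a continuous
section; `⊤` (infinity) if no such `k` exists. -/
noncomputable def topologicalComplexity (X : Type*) [TopologicalSpace X] : ℕ∞ :=
  sInf ((↑) '' {k : ℕ | HasMotionCover X k})

lemma HasMotionCover.pos {X : Type*} [TopologicalSpace X] [Nonempty X] {k : ℕ}
    (h : HasMotionCover X k) : 0 < k := by
  obtain ⟨U, -, hU, -⟩ := h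
  rcases Nat.eq_zero_or_pos k with rfl | hpos
  · exfalso
    have hne : (Set.univ : Set (X × X)).Nonempty := Set.univ_nonempty
    rw [← hU] at hne
    obtain ⟨z, hz⟩ := hne
    rw [Set.mem_iUnion] at hz
    obtain ⟨i, -⟩ := hz
    exact i.elim0
  · exact hpos

/-- The key combinatorial construction: from motion covers of sizes `n` and `m` for `X`
and `Y`, produce a motion cover of size `n + m - 1` for `X × Y`. -/
theorem hasMotionCover_prod {X Y : Type*} [TopologicalSpace X] [TopologicalSpace Y]
    [TopologicalSpace.MetrizableSpace X] [TopologicalSpace.MetrizableSpace Y]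
    {n m : ℕ} (hX : HasMotionCover X n) (hY : HasMotionCover Y m) :
    HasMotionCover (X × Y) (n + m - 1) := by
  classical
  obtain ⟨U, hUo, hUc, hUs⟩ := hX
  obtain ⟨V, hVo, hVc, hVs⟩ := hY
  choose sU hsU using hUs
  choose sV hsV using hVs
  letI : MetricSpace (X × X) := TopologicalSpace.metrizableSpaceMetric _
  letI : MetricSpace (Y × Y) := TopologicalSpace.metrizableSpaceMetric _
  obtain ⟨f, hf⟩ := PartitionOfUnity.exists_isSubordinate isClosed_univ U hUo
    (Set.univ_subset_iff.mpr hUc)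
  obtain ⟨g, hg⟩ := PartitionOfUnity.exists_isSubordinate isClosed_univ V hVo
    (Set.univ_subset_iff.mpr hVc)
  set Z := (X × Y) × (X × Y) with hZ
  let pX : Z → X × X := fun z => (z.1.1, z.2.1)
  let pY : Z → Y × Y := fun z => (z.1.2, z.2.2)
  have hpX : Continuous pX := by fun_prop
  have hpY : Continuous pY := by fun_prop
  let F : Fin n → Z → ℝ := fun i z => f i (pX z)
  let G : Fin m → Z → ℝ := fun j z => g j (pY z)
  have hFc : ∀ i, Continuous (F i) := fun i => (f i).continuous.comp hpX
  have hGc : ∀ j, Continuous (G j) := fun j => (g j).continuous.comp hpY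
  have hF0 : ∀ i z, 0 ≤ F i z := fun i z => f.nonneg i _
  have hG0 : ∀ j z, 0 ≤ G j z := fun j z => g.nonneg j _
  have hFU : ∀ i z, 0 < F i z → pX z ∈ U i := fun i z h =>
    hf i (subset_tsupport _ (Function.mem_support.mpr h.ne'))
  have hGV : ∀ j z, 0 < G j z → pY z ∈ V j := fun j z h =>
    hg j (subset_tsupport _ (Function.mem_support.mpr h.ne'))
  let c : Fin n × Fin m → Z → ℝ := fun p z => F p.1 z * G p.2 z
  have hc : ∀ p, Continuous (c p) := fun p => (hFc p.1).mul (hGc p.2)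
  let wt : Fin n × Fin m → ℕ := fun p => p.1.1 + p.2.1
  let W : Fin n × Fin m → Set Z := fun p =>
    {z | 0 < c p z ∧ ∀ q, wt p ≤ wt q → q ≠ p → c q z < c p z}
  -- openness of the W p
  have hWo : ∀ p, IsOpen (W p) := by
    intro p
    have hrw : W p = {z | 0 < c p z} ∩ ⋂ q : Fin n × Fin m,
        (if wt p ≤ wt q ∧ q ≠ p then {z | c q z < c p z} else Set.univ) := by
      ext z
      simp only [W, Set.mem_inter_iff, Set.mem_iInter, Set.mem_setOf_eq]
      constructor
      · rintro ⟨h0, h⟩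
        refine ⟨h0, fun q => ?_⟩
        split_ifs with hq
        · exact h q hq.1 hq.2
        · trivial
      · rintro ⟨h0, h⟩
        refine ⟨h0, fun q h1 h2 => ?_⟩
        have := h q
        rwa [if_pos ⟨h1, h2⟩] at this
    rw [hrw]
    refine (isOpen_lt continuous_const (hc p)).inter (isOpen_iInter_of_finite fun q => ?_)
    split_ifs
    · exact isOpen_lt (hc q) (hc p)
    · exact isOpen_univ
  -- disjointness for equal weight
  have hWdisj : ∀ p q, p ≠ q → wt p = wt q → ∀ z : Z, z ∈ W p → z ∈ W q → False := by
    intro p q hne hwt z hzp hzq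
    have h1 : c q z < c p z := hzp.2 q (le_of_eq hwt) (fun h => hne h.symm)
    have h2 : c p z < c q z := hzq.2 p (le_of_eq hwt.symm) hne
    exact lt_asymm h1 h2
  -- membership in the covers
  have hWU : ∀ p (z : Z), z ∈ W p → pX z ∈ U p.1 ∧ pY z ∈ V p.2 := by
    intro p z hz
    have hFG := (mul_pos_iff.mp hz.1).resolve_right (fun h => (hF0 p.1 z).not_gt h.1)
    exact ⟨hFU _ _ hFG.1, hGV _ _ hFG.2⟩
  -- covering
  have hcov : ∀ z : Z, ∃ p, z ∈ W p := by
    intro z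
    obtain ⟨i₁, hi₁⟩ := f.exists_pos (Set.mem_univ (pX z))
    obtain ⟨j₁, hj₁⟩ := g.exists_pos (Set.mem_univ (pY z))
    let T₁ : Finset (Fin n) := Finset.univ.filter fun i => ∀ a, F a z ≤ F i z
    let T₂ : Finset (Fin m) := Finset.univ.filter fun j => ∀ b, G b z ≤ G j z
    have hT₁ : T₁.Nonempty := by
      obtain ⟨i, -, hi⟩ := Finset.exists_max_image Finset.univ (fun i => F i z)
        ⟨i₁, Finset.mem_univ _⟩
      exact ⟨i, Finset.mem_filter.mpr ⟨Finset.mem_univ _, fun a => hi a (Finset.mem_univ _)⟩⟩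
    have hT₂ : T₂.Nonempty := by
      obtain ⟨j, -, hj⟩ := Finset.exists_max_image Finset.univ (fun j => G j z)
        ⟨j₁, Finset.mem_univ _⟩
      exact ⟨j, Finset.mem_filter.mpr ⟨Finset.mem_univ _, fun b => hj b (Finset.mem_univ _)⟩⟩
    set i₀ := T₁.max' hT₁ with hi₀def
    set j₀ := T₂.max' hT₂ with hj₀def
    have hi₀ : ∀ a, F a z ≤ F i₀ z := (Finset.mem_filter.mp (T₁.max'_mem hT₁)).2
    have hj₀ : ∀ b, G b z ≤ G j₀ z := (Finset.mem_filter.mp (T₂.max'_mem hT₂)).2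
    have hFpos : 0 < F i₀ z := lt_of_lt_of_le hi₁ (hi₀ i₁)
    have hGpos : 0 < G j₀ z := lt_of_lt_of_le hj₁ (hj₀ j₁)
    refine ⟨(i₀, j₀), ⟨mul_pos hFpos hGpos, ?_⟩⟩
    rintro ⟨a, b⟩ hle hne
    rcases lt_or_eq_of_le (hi₀ a) with hlt | heqF
    · calc F a z * G b z ≤ F a z * G j₀ z :=
            mul_le_mul_of_nonneg_left (hj₀ b) (hF0 a z)
        _ < F i₀ z * G j₀ z := mul_lt_mul_of_pos_right hlt hGpos
    · rcases lt_or_eq_of_le (hj₀ b) with hlt' | heqG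
      · show F a z * G b z < F i₀ z * G j₀ z
        rw [← heqF]
        exact mul_lt_mul_of_pos_left hlt' (by rw [heqF]; exact hFpos)
      · exfalso
        have haT : a ∈ T₁ := Finset.mem_filter.mpr
          ⟨Finset.mem_univ _, fun x => (hi₀ x).trans_eq heqF.symm⟩
        have hbT : b ∈ T₂ := Finset.mem_filter.mpr
          ⟨Finset.mem_univ _, fun x => (hj₀ x).trans_eq heqG.symm⟩
        have hai : (a : ℕ) ≤ i₀ := Finset.le_max' T₁ a haT
        have hbj : (b : ℕ) ≤ j₀ := Finset.le_max' T₂ b hbT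
        have hwle : (i₀ : ℕ) + (j₀ : ℕ) ≤ (a : ℕ) + (b : ℕ) := hle
        apply hne
        have ha : a = i₀ := Fin.ext (by omega)
        have hb : b = j₀ := Fin.ext (by omega)
        rw [ha, hb]
    -- weights fit
  let Cov : Fin (n + m - 1) → Set Z := fun k => ⋃ (p : Fin n × Fin m) (_ : wt p = (k : ℕ)), W p
  refine ⟨Cov, fun k => isOpen_iUnion fun p => isOpen_iUnion fun _ => hWo p, ?_, ?_⟩
  · apply Set.eq_univ_of_forall
    intro z
    obtain ⟨p, hp⟩ := hcov z
    have h1 : (p.1 : ℕ) < n := p.1.isLt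
    have h2 : (p.2 : ℕ) < m := p.2.isLt
    have hlt : wt p < n + m - 1 := by
      show (p.1 : ℕ) + (p.2 : ℕ) < n + m - 1
      omega
    exact Set.mem_iUnion.2 ⟨⟨wt p, hlt⟩, Set.mem_iUnion.2 ⟨p, Set.mem_iUnion.2 ⟨rfl, hp⟩⟩⟩
  · intro k
    let ι' := {p : Fin n × Fin m // wt p = (k : ℕ)}
    let S : ι' → Set (Cov k) := fun q => (Subtype.val : Cov k → Z) ⁻¹' W q.1
    have hSo : ∀ q, IsOpen (S q) := fun q => (hWo q.1).preimage continuous_subtype_val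
    let ρX : ∀ q : ι', ↥(S q) → ↥(U q.1.1) := fun q x =>
      ⟨pX x.1.1, (hWU q.1 x.1.1 x.2).1⟩
    let ρY : ∀ q : ι', ↥(S q) → ↥(V q.1.2) := fun q x =>
      ⟨pY x.1.1, (hWU q.1 x.1.1 x.2).2⟩
    have hρX : ∀ q, Continuous (ρX q) := fun q =>
      Continuous.subtype_mk (hpX.comp (continuous_subtype_val.comp continuous_subtype_val)) _
    have hρY : ∀ q, Continuous (ρY q) := fun q =>
      Continuous.subtype_mk (hpY.comp (continuous_subtype_val.comp continuous_subtype_val)) _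
    let φ : ∀ q : ι', C(↥(S q), C(I, X × Y)) := fun q =>
      { toFun := fun x => (sU q.1.1 (ρX q x)).prodMk (sV q.1.2 (ρY q x))
        continuous_toFun := by
          apply ContinuousMap.continuous_of_continuous_uncurry
          show Continuous fun pr : ↥(S q) × I =>
            ((sU q.1.1 (ρX q pr.1)) pr.2, (sV q.1.2 (ρY q pr.1)) pr.2)
          apply Continuous.prodMk
          · exact continuous_eval.comp
              ((((sU q.1.1).continuous.comp (hρX q)).comp continuous_fst).prodMk continuous_snd)
          · exact continuous_eval.comp
              ((((sV q.1.2).continuous.comp (hρY q)).comp continuous_fst).prodMk continuous_snd) }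
    have hφagree : ∀ (q q' : ι') (x : Cov k) (hxq : x ∈ S q) (hxq' : x ∈ S q'),
        φ q ⟨x, hxq⟩ = φ q' ⟨x, hxq'⟩ := by
      intro q q' x hxq hxq'
      rcases eq_or_ne q q' with rfl | hne
      · rfl
      · exact absurd (hWdisj q.1 q'.1 (fun h => hne (Subtype.ext h))
          (q.2.trans q'.2.symm) x.1 hxq hxq') not_false
    have hScov : ∀ x : Cov k, ∃ q : ι', S q ∈ nhds x := by
      intro x
      have hx := x.2
      simp only [Cov, Set.mem_iUnion] at hx
      obtain ⟨p, hpk, hxp⟩ := hx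
      exact ⟨⟨p, hpk⟩, (hSo ⟨p, hpk⟩).mem_nhds hxp⟩
    refine ⟨ContinuousMap.liftCover S φ hφagree hScov, ?_⟩
    intro pt
    obtain ⟨q, hq⟩ : ∃ q : ι', pt.1 ∈ W q.1 := by
      have hx := pt.2
      simp only [Cov, Set.mem_iUnion] at hx
      obtain ⟨p, h1, h2⟩ := hx
      exact ⟨⟨p, h1⟩, h2⟩
    have hmem : pt ∈ S q := hq
    have hlift : ContinuousMap.liftCover S φ hφagree hScov pt = φ q ⟨pt, hmem⟩ :=
      ContinuousMap.liftCover_coe (⟨pt, hmem⟩ : ↥(S q))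
    rw [hlift]
    have h1 := hsU q.1.1 (ρX q ⟨pt, hmem⟩)
    have h2 := hsV q.1.2 (ρY q ⟨pt, hmem⟩)
    rw [Prod.ext_iff] at h1 h2
    exact Prod.ext (Prod.ext h1.1 h2.1) (Prod.ext h1.2 h2.2)

/-- the product inequality `TC(X × Y) ≤ TC(X) + TC(Y) - 1` for
path-connected metrizable spaces. -/
theorem tc_product_inequality (X Y : Type*) [TopologicalSpace X] [TopologicalSpace Y]
    [PathConnectedSpace X] [PathConnectedSpace Y]
    [TopologicalSpace.MetrizableSpace X] [TopologicalSpace.MetrizableSpace Y] :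
    topologicalComplexity (X × Y) ≤ topologicalComplexity X + topologicalComplexity Y - 1 := by
  have hXne : Nonempty X := PathConnectedSpace.nonempty
  have hYne : Nonempty Y := PathConnectedSpace.nonempty
  by_cases hSX : {k : ℕ | HasMotionCover X k}.Nonempty
  · by_cases hSY : {k : ℕ | HasMotionCover Y k}.Nonempty
    · have hn : HasMotionCover X (sInf {k : ℕ | HasMotionCover X k}) := Nat.sInf_mem hSX
      have hm : HasMotionCover Y (sInf {k : ℕ | HasMotionCover Y k}) := Nat.sInf_mem hSY
      set n := sInf {k : ℕ | HasMotionCover X k} with hndef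
      set m := sInf {k : ℕ | HasMotionCover Y k} with hmdef
      have hnm : HasMotionCover (X × Y) (n + m - 1) := hasMotionCover_prod hn hm
      have h1 : topologicalComplexity (X × Y) ≤ ((n + m - 1 : ℕ) : ℕ∞) :=
        sInf_le ⟨n + m - 1, hnm, rfl⟩
      have eX : topologicalComplexity X = (n : ℕ∞) :=
        le_antisymm (sInf_le ⟨n, hn, rfl⟩)
          (le_sInf (by rintro b ⟨j, hj, rfl⟩; exact_mod_cast Nat.sInf_le hj))
      have eY : topologicalComplexity Y = (m : ℕ∞) :=
        le_antisymm (sInf_le ⟨m, hm, rfl⟩)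
          (le_sInf (by rintro b ⟨j, hj, rfl⟩; exact_mod_cast Nat.sInf_le hj))
      refine h1.trans (le_of_eq ?_)
      rw [eX, eY]
      norm_cast
    · have hY : topologicalComplexity Y = ⊤ := by
        rw [topologicalComplexity, Set.not_nonempty_iff_eq_empty.mp hSY, Set.image_empty,
          sInf_empty]
      rw [hY, add_top]
      exact le_top.trans (le_of_eq (by rw [← Nat.cast_one, ENat.top_sub_coe]))
  · have hX : topologicalComplexity X = ⊤ := by
      rw [topologicalComplexity, Set.not_nonempty_iff_eq_empty.mp hSX, Set.image_empty,
        sInf_empty]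
    rw [hX, top_add]
    exact le_top.trans (le_of_eq (by rw [← Nat.cast_one, ENat.top_sub_coe]))
end

section
/- TC(S¹) = 2, where S¹ is the circle. -/
open unitInterval ContinuousMap

open Complex

lemma mem_slit_of_circle {z : ℂ} (hz : ‖z‖ = 1) (h : z ≠ -1) : z ∈ Complex.slitPlane := by
  rw [Complex.mem_slitPlane_iff]
  by_contra hc
  push_neg at hc
  obtain ⟨h1, h2⟩ := hc
  apply h
  have hre : z = (z.re : ℂ) := by
    apply Complex.ext <;> simp [h2]
  rw [hre] at hz ⊢
  rw [Complex.norm_real, Real.norm_eq_abs] at hz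
  have : z.re = -1 := by
    rcases abs_eq (le_refl (0:ℝ) |>.trans zero_le_one) |>.mp hz with h' | h'
    · nlinarith
    · exact h'
  rw [this]; norm_num

lemma exp_arg_of_abs_one {z : ℂ} (hz : ‖z‖ = 1) :
    Complex.exp (z.arg * Complex.I) = z := by
  conv_rhs => rw [← Complex.norm_mul_exp_arg_mul_I z]
  rw [hz, Complex.ofReal_one, one_mul]

def GoodLift (f : I → ℂ) : Prop :=
  ∃ u : I → ℝ, Continuous u ∧ u 0 = u 1 ∧ ∀ s, f s = Complex.exp (u s * Complex.I)

lemma goodLift_step {f g : I → ℂ} (hf : Continuous f)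
    (haf : ∀ s, ‖f s‖ = 1) (hag : ∀ s, ‖g s‖ = 1)
    (hloop : f 0 = f 1) (hne : ∀ s, f s ≠ -g s) (hg : GoodLift g) : GoodLift f := by
  obtain ⟨u, hu, hu01, hgu⟩ := hg
  have hgc : Continuous g := by
    have : g = fun s => Complex.exp (u s * Complex.I) := funext hgu
    rw [this]; fun_prop
  set h : I → ℂ := fun s => f s * (starRingEnd ℂ) (g s) with hh
  have hcc : ∀ s, (starRingEnd ℂ) (g s) * g s = 1 := by
    intro s
    rw [mul_comm, Complex.mul_conj, Complex.normSq_eq_norm_sq, hag, one_pow, Complex.ofReal_one]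
  have habs : ∀ s, ‖h s‖ = 1 := by
    intro s; simp [hh, map_mul, haf, hag]
  have hne1 : ∀ s, h s ≠ -1 := by
    intro s hc
    apply hne s
    have := congrArg (· * g s) hc
    simp only [hh] at this
    rw [mul_assoc, hcc s, mul_one, neg_one_mul] at this
    exact this
  have hslit : ∀ s, h s ∈ Complex.slitPlane := fun s => mem_slit_of_circle (habs s) (hne1 s)
  have hhc : Continuous h := hf.mul (Complex.continuous_conj.comp hgc)
  set v : I → ℝ := fun s => (h s).arg with hv
  have hvc : Continuous v := by
    rw [continuous_iff_continuousAt]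
    exact fun s => (Complex.continuousAt_arg (hslit s)).comp hhc.continuousAt
  refine ⟨u + v, hu.add hvc, ?_, ?_⟩
  · have : h 0 = h 1 := by simp [hh, hloop, hgu, hu01]
    simp [Pi.add_apply, hu01, hv, this]
  · intro s
    have hev : Complex.exp (v s * Complex.I) = h s := exp_arg_of_abs_one (habs s)
    have : Complex.exp ((u s + v s : ℝ) * Complex.I)
        = Complex.exp (u s * Complex.I) * Complex.exp (v s * Complex.I) := by
      rw [← Complex.exp_add]; push_cast; ring_nf
    rw [Pi.add_apply, this, hev, ← hgu, hh]
    rw [mul_comm (g s), mul_assoc, hcc s, mul_one]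
lemma no_contraction (K : I × I → ℂ) (hK : Continuous K)
    (habs : ∀ q, ‖K q‖ = 1)
    (h0 : ∀ a : I, K (a, 0) = Complex.exp ((2 * Real.pi * a) * Complex.I))
    (h1 : ∀ a : I, K (a, 1) = 1)
    (hloop : ∀ b : I, K (0, b) = K (1, b)) : False := by
  have huc : UniformContinuous K := CompactSpace.uniformContinuous_of_continuous hK
  obtain ⟨δ, hδ, hKδ⟩ := Metric.uniformContinuous_iff.mp huc 2 (by norm_num)
  obtain ⟨n, hn⟩ := exists_nat_one_div_lt hδ
  set t : ℕ → I := fun j => Set.projIcc (0:ℝ) 1 zero_le_one ((j : ℝ) / (n + 1)) with ht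
  have htd : ∀ j : ℕ, dist (t j) (t (j + 1)) < δ := by
    intro j
    have h2 : dist (t j) (t (j + 1)) ≤ dist ((j : ℝ) / (n + 1)) (((j + 1 : ℕ) : ℝ) / (n + 1)) := by
      simp only [ht]
      simpa using (LipschitzWith.projIcc (zero_le_one : (0:ℝ) ≤ 1)).dist_le_mul
        ((j : ℝ) / (n + 1)) (((j + 1 : ℕ) : ℝ) / (n + 1))
    refine lt_of_le_of_lt h2 ?_
    rw [Real.dist_eq]
    push_cast
    rw [div_sub_div_same]
    have h3 : ((j : ℝ) - (j + 1)) = -1 := by ring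
    rw [h3, abs_div, abs_neg, abs_one, abs_of_pos (by positivity)]
    simpa using hn
  have hclose : ∀ j : ℕ, ∀ a : I, K (a, t j) ≠ -K (a, t (j + 1)) := by
    intro j a hc
    have hd : dist ((a, t j) : I × I) (a, t (j + 1)) < δ := by
      rw [Prod.dist_eq]
      simp only [dist_self]
      exact max_lt hδ (htd j)
    have hlt := hKδ hd
    rw [Complex.dist_eq, hc] at hlt
    have : -K (a, t (j + 1)) - K (a, t (j + 1)) = -(2 * K (a, t (j + 1))) := by ring
    rw [this, norm_neg, norm_mul] at hlt
    rw [habs] at hlt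
    simp [Complex.norm_two] at hlt
  have hcont : ∀ b : I, Continuous (fun a : I => K (a, b)) := fun b =>
    hK.comp (continuous_id.prodMk continuous_const)
  -- downward induction
  have key : ∀ m : ℕ, m ≤ n + 1 → GoodLift (fun a : I => K (a, t (n + 1 - m))) := by
    intro m
    induction m with
    | zero =>
      intro _
      have htop : t (n + 1 - 0) = 1 := by
        apply Subtype.ext
        simp only [ht, Nat.sub_zero, Set.coe_projIcc]
        push_cast
        rw [div_self (by positivity)]
        norm_num
      rw [htop]
      exact ⟨fun _ => 0, continuous_const, rfl, fun s => by show K (s, 1) = _; rw [h1]; simp⟩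
    | succ m ih =>
      intro hm
      have hj : n + 1 - m = (n + 1 - (m + 1)) + 1 := by omega
      refine goodLift_step (g := fun a : I => K (a, t ((n + 1 - (m + 1)) + 1))) (hcont _)
        (fun s => habs _) (fun s => habs _) (hloop _) ?_ ?_
      · intro s
        simpa [← hj] using hclose (n + 1 - (m + 1)) s
      · rw [← hj]
        exact ih (by omega)
  have hbot := key (n + 1) le_rfl
  have ht0 : t (n + 1 - (n + 1)) = 0 := by
    apply Subtype.ext
    simp [ht, Set.coe_projIcc]
  rw [ht0] at hbot
  obtain ⟨u, hu, hu01, hgu⟩ := hbot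
  -- u a - 2π a ∈ 2πℤ
  have hk : ∀ a : I, ∃ k : ℤ, u a - 2 * Real.pi * a = 2 * Real.pi * k := by
    intro a
    have h := hgu a
    simp only at h
    rw [h0] at h
    rw [Complex.exp_eq_exp_iff_exists_int] at h
    obtain ⟨k, hk2⟩ := h
    refine ⟨-k, ?_⟩
    have hre : ((2 * Real.pi * a - u a - k * (2 * Real.pi) : ℝ) : ℂ) * Complex.I = 0 := by
      push_cast
      linear_combination hk2
    rw [mul_eq_zero] at hre
    rcases hre with hre | hre
    · rw [Complex.ofReal_eq_zero] at hre
      push_cast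
      linarith
    · exact absurd hre Complex.I_ne_zero
  -- transfer to a function on ℝ and apply IVT
  set W : ℝ → ℝ := fun x => u (Set.projIcc (0:ℝ) 1 zero_le_one x)
      - 2 * Real.pi * (Set.projIcc (0:ℝ) 1 zero_le_one x : ℝ) with hW
  have hWc : Continuous W := by
    apply Continuous.sub
    · exact hu.comp continuous_projIcc
    · exact continuous_const.mul (continuous_subtype_val.comp continuous_projIcc)
  have hWk : ∀ x : ℝ, ∃ k : ℤ, W x = 2 * Real.pi * k := fun x => hk _
  have hW0 : W 0 = u 0 := by
    simp [hW, Set.projIcc_left]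
  have hW1 : W 1 = u 0 - 2 * Real.pi := by
    rw [hW]
    simp only [Set.projIcc_right]
    rw [hu01]
    norm_num
  have hπ := Real.pi_pos
  have hmem : W 0 - Real.pi ∈ Set.Ioo (W 1) (W 0) := by
    constructor <;> [rw [hW0, hW1]; skip] <;> linarith
  obtain ⟨x, _, hx⟩ := intermediate_value_Ioo' (zero_le_one) hWc.continuousOn hmem
  obtain ⟨k, hk1⟩ := hWk x
  obtain ⟨k0, hk0⟩ := hWk 0
  rw [hk1, hk0] at hx
  have : (2 * (k : ℝ)) * Real.pi = (2 * k0 - 1) * Real.pi := by ring_nf; ring_nf at hx; linarith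
  have h2 : (2 * (k : ℝ)) = 2 * k0 - 1 := mul_right_cancel₀ (ne_of_gt hπ) this
  have : (2 * k : ℤ) = 2 * k0 - 1 := by exact_mod_cast h2
  omega
lemma circle_coe_continuous : Continuous ((↑) : Circle → ℂ) := continuous_induced_dom

lemma exists_section (U : Set (Circle × Circle)) (θ : U → ℝ) (hθc : Continuous θ)
    (hθ : ∀ p : U, Circle.exp (θ p) = (p : Circle × Circle).2 / (p : Circle × Circle).1) :
    ∃ s : C(U, C(I, Circle)), ∀ p : U, ((s p) 0, (s p) 1) = (p : Circle × Circle) := by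
  have hc : Continuous fun q : U × I => (q.1 : Circle × Circle).1 * Circle.exp (q.2 * θ q.1) := by
    apply Continuous.mul
    · exact continuous_fst.comp (continuous_subtype_val.comp continuous_fst)
    · exact Circle.exp.continuous.comp
        ((continuous_subtype_val.comp continuous_snd).mul (hθc.comp continuous_fst))
  refine ⟨ContinuousMap.curry ⟨_, hc⟩, fun p => ?_⟩
  have e0 : ((ContinuousMap.curry ⟨_, hc⟩ p) 0 : Circle)
      = (p : Circle × Circle).1 * Circle.exp ((0 : I) * θ p) := rfl
  have e1 : ((ContinuousMap.curry ⟨_, hc⟩ p) 1 : Circle)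
      = (p : Circle × Circle).1 * Circle.exp ((1 : I) * θ p) := rfl
  rw [Prod.ext_iff]
  constructor
  · rw [e0]
    norm_num
  · rw [e1]
    norm_num [hθ p]
lemma hasMotionCover_two : HasMotionCover Circle 2 := by
  classical
  set A : Set (Circle × Circle) := {p | p.1 ≠ p.2} with hA
  set B : Set (Circle × Circle) := {p | (p.1 : ℂ) ≠ -(p.2 : ℂ)} with hB
  refine ⟨![A, B], ?_, ?_, ?_⟩
  · intro i
    fin_cases i
    · exact (isClosed_eq (continuous_fst : Continuous fun p : Circle × Circle => p.1)
        continuous_snd).isOpen_compl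
    · exact (isClosed_eq
        ((circle_coe_continuous.comp continuous_fst : Continuous fun p : Circle × Circle => (p.1 : ℂ)))
        ((circle_coe_continuous.comp continuous_snd).neg)).isOpen_compl
  · rw [Set.eq_univ_iff_forall]
    intro p
    by_cases h : p.1 = p.2
    · rw [Set.mem_iUnion]
      refine ⟨1, ?_⟩
      show (p.1 : ℂ) ≠ -(p.2 : ℂ)
      intro hc
      rw [h] at hc
      have h2 : (2 : ℂ) * (p.2 : ℂ) = 0 := by linear_combination hc
      simp [Circle.coe_ne_zero] at h2
    · rw [Set.mem_iUnion]
      exact ⟨0, h⟩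
  · intro i
    fin_cases i
    · -- A : x ≠ y, θ = π + arg (-(y/x))
      show ∃ s : C((A : Set (Circle × Circle)), C(I, Circle)), _
      have hnz : ∀ p : A, (-(((p : Circle × Circle).2 : ℂ) / ((p : Circle × Circle).1 : ℂ)))
          ∈ Complex.slitPlane := by
        rintro ⟨⟨x, y⟩, hp⟩
        refine mem_slit_of_circle (by simp [Circle.norm_coe]) ?_
        simp only [ne_eq, neg_eq_iff_eq_neg, neg_neg]
        intro hc
        rw [div_eq_one_iff_eq (Circle.coe_ne_zero x)] at hc
        exact hp (Circle.coe_injective hc.symm)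
      have hwc : Continuous fun p : A =>
          (-(((p : Circle × Circle).2 : ℂ) / ((p : Circle × Circle).1 : ℂ))) := by
        apply Continuous.neg
        apply Continuous.div
        · exact circle_coe_continuous.comp (continuous_snd.comp continuous_subtype_val)
        · exact circle_coe_continuous.comp (continuous_fst.comp continuous_subtype_val)
        · exact fun p => Circle.coe_ne_zero _
      apply exists_section
        (θ := fun p : A => Real.pi +
          Complex.arg (-(((p : Circle × Circle).2 : ℂ) / ((p : Circle × Circle).1 : ℂ))))
      · rw [continuous_iff_continuousAt]
        intro p
        exact continuousAt_const.add
          (ContinuousAt.comp (g := Complex.arg)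
            (f := fun p : A => (-(((p : Circle × Circle).2 : ℂ) / ((p : Circle × Circle).1 : ℂ))))
            (Complex.continuousAt_arg (hnz p)) hwc.continuousAt)
      · intro p
        apply Circle.coe_injective
        rw [Circle.coe_div, Circle.coe_exp]
        push_cast
        rw [add_mul, Complex.exp_add, Complex.exp_pi_mul_I]
        rw [exp_arg_of_abs_one (by simp [Circle.norm_coe])]
        ring
    · -- B : x ≠ -y, θ = arg (y/x)
      show ∃ s : C((B : Set (Circle × Circle)), C(I, Circle)), _
      have hnz : ∀ p : B, ((((p : Circle × Circle).2 : ℂ) / ((p : Circle × Circle).1 : ℂ)))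
          ∈ Complex.slitPlane := by
        rintro ⟨⟨x, y⟩, hp⟩
        refine mem_slit_of_circle (by simp [Circle.norm_coe]) ?_
        intro hc
        rw [div_eq_iff (Circle.coe_ne_zero x)] at hc
        apply hp
        show (x : ℂ) = -(y : ℂ)
        rw [hc]; ring
      have hwc : Continuous fun p : B =>
          ((((p : Circle × Circle).2 : ℂ) / ((p : Circle × Circle).1 : ℂ))) := by
        apply Continuous.div
        · exact circle_coe_continuous.comp (continuous_snd.comp continuous_subtype_val)
        · exact circle_coe_continuous.comp (continuous_fst.comp continuous_subtype_val)
        · exact fun p => Circle.coe_ne_zero _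
      apply exists_section
        (θ := fun p : B =>
          Complex.arg ((((p : Circle × Circle).2 : ℂ) / ((p : Circle × Circle).1 : ℂ))))
      · rw [continuous_iff_continuousAt]
        intro p
        exact ContinuousAt.comp (g := Complex.arg)
          (f := fun p : B => ((((p : Circle × Circle).2 : ℂ) / ((p : Circle × Circle).1 : ℂ))))
          (Complex.continuousAt_arg (hnz p)) hwc.continuousAt
      · intro p
        apply Circle.coe_injective
        rw [Circle.coe_div, Circle.coe_exp]
        exact exp_arg_of_abs_one (by simp [Circle.norm_coe])
lemma not_hasMotionCover_zero : ¬ HasMotionCover Circle 0 := by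
  rintro ⟨U, -, hcov, -⟩
  have : (1 : Circle × Circle) ∈ ⋃ i, U i := hcov.symm ▸ Set.mem_univ _
  rw [Set.mem_iUnion] at this
  obtain ⟨i, -⟩ := this
  exact i.elim0

lemma not_hasMotionCover_one : ¬ HasMotionCover Circle 1 := by
  rintro ⟨U, -, hcov, hsec⟩
  have hmem : ∀ p : Circle × Circle, p ∈ U 0 := by
    intro p
    have : p ∈ ⋃ i, U i := hcov.symm ▸ Set.mem_univ _
    rw [Set.mem_iUnion] at this
    obtain ⟨i, hi⟩ := this
    rwa [Subsingleton.elim (0 : Fin 1) i]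
  obtain ⟨s, hs⟩ := hsec 0
  have hembc : Continuous fun a : I => (⟨(Circle.exp (2 * Real.pi * a), 1), hmem _⟩ :
      (U 0 : Set (Circle × Circle))) := by
    apply Continuous.subtype_mk
    apply Continuous.prodMk
    · exact Circle.exp.continuous.comp (by fun_prop)
    · exact continuous_const
  set emb : C(I, (U 0 : Set (Circle × Circle))) := ⟨_, hembc⟩ with hemb
  set F : C(I, C(I, Circle)) := s.comp emb with hF
  set K : I × I → ℂ := fun q => ((F.uncurry q : Circle) : ℂ) with hK
  refine no_contraction K ?_ ?_ ?_ ?_ ?_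
  · exact circle_coe_continuous.comp F.uncurry.continuous
  · intro q; simp [hK, Circle.norm_coe]
  · intro a
    have h1 := hs (emb a)
    have : K (a, 0) = ((((s (emb a)) 0 : Circle)) : ℂ) := rfl
    have h2 : (s (emb a)) 0 = ((emb a : Circle × Circle)).1 := congrArg Prod.fst h1
    rw [this, h2]
    show ((Circle.exp (2 * Real.pi * a) : Circle) : ℂ) = _
    rw [Circle.coe_exp]
    push_cast
    ring_nf
  · intro a
    have h1 := hs (emb a)
    have : K (a, 1) = ((((s (emb a)) 1 : Circle)) : ℂ) := rfl
    have h2 : (s (emb a)) 1 = ((emb a : Circle × Circle)).2 := congrArg Prod.snd h1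
    rw [this, h2]
    rfl
  · intro b
    have he : emb 0 = emb 1 := by
      apply Subtype.ext
      refine Prod.ext_iff.mpr ⟨?_, rfl⟩
      show Circle.exp (2 * Real.pi * ((0 : I) : ℝ)) = Circle.exp (2 * Real.pi * ((1 : I) : ℝ))
      have hc0 : ((0 : I) : ℝ) = 0 := rfl
      have hc1 : ((1 : I) : ℝ) = 1 := rfl
      rw [hc0, hc1, mul_zero, Circle.exp_zero, mul_one,
        show (2 : ℝ) * Real.pi = 0 + 2 * Real.pi by ring, Circle.periodic_exp 0,
        Circle.exp_zero]
    show ((((s (emb 0)) b : Circle)) : ℂ) = ((((s (emb 1)) b : Circle)) : ℂ)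
    rw [he]

/-- `TC(S¹) = 2`. -/
theorem tc_circle : topologicalComplexity Circle = 2 := by
  apply le_antisymm
  · exact sInf_le ⟨2, hasMotionCover_two, by norm_num⟩
  · apply le_sInf
    rintro x ⟨k, hk, rfl⟩
    have h0 : k ≠ 0 := fun h => not_hasMotionCover_zero (h ▸ hk)
    have h1 : k ≠ 1 := fun h => not_hasMotionCover_one (h ▸ hk)
    have : (2 : ℕ) ≤ k := by omega
    exact_mod_cast Nat.cast_le.mpr this
end

section
/- For n ≥ 2, TC(F(ℂ, n)) ≤ 2n − 2. -/
open unitInterval ContinuousMap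

/-- The configuration space `F(ℝᵐ, n)` of `n` distinct ordered points in Euclidean `m`-space. -/
noncomputable def Conf (m n : ℕ) : Type :=
  {x : Fin n → EuclideanSpace ℝ (Fin m) // Function.Injective x}

noncomputable instance (m n : ℕ) : TopologicalSpace (Conf m n) :=
  inferInstanceAs (TopologicalSpace {x : Fin n → EuclideanSpace ℝ (Fin m) // Function.Injective x})

/-- The configuration space `F(ℂ, n)` of `n` distinct ordered points in the plane `ℂ`. -/
def ConfC (n : ℕ) : Type :=
  {x : Fin n → ℂ // Function.Injective x}

instance (n : ℕ) : TopologicalSpace (ConfC n) :=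
  inferInstanceAs (TopologicalSpace {x : Fin n → ℂ // Function.Injective x})

namespace TCProof
open Set Metric

/-- The section property for a subset of `X × X`. -/
def SecSet (X : Type*) [TopologicalSpace X] (S : Set (X × X)) : Prop :=
  ∃ s : C((S : Set (X × X)), C(I, X)), ∀ p : S, ((s p) 0, (s p) 1) = (p : X × X)

lemma SecSet.mono {X : Type*} [TopologicalSpace X] {S T : Set (X × X)}
    (h : S ⊆ T) (hT : SecSet X T) : SecSet X S := by
  obtain ⟨s, hs⟩ := hT
  refine ⟨s.comp ⟨fun p => ⟨p.1, h p.2⟩, by fun_prop⟩, fun p => hs _⟩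

/-- A deformation of `U` within `Z` to the point `z₀`. -/
def Contr (Z : Type*) [TopologicalSpace Z] (z₀ : Z) (U : Set Z) : Prop :=
  ∃ H : C(↥U × ↥I, Z), (∀ u : U, H (u, 0) = u) ∧ (∀ u : U, H (u, 1) = z₀)

lemma Contr.mono {Z : Type*} [TopologicalSpace Z] {z₀ : Z} {U V : Set Z}
    (h : V ⊆ U) (hU : Contr Z z₀ U) : Contr Z z₀ V := by
  obtain ⟨H, h0, h1⟩ := hU
  refine ⟨H.comp ⟨fun p => (⟨p.1.1, h p.1.2⟩, p.2), by fun_prop⟩, fun u => h0 _, fun u => h1 _⟩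

/-- Gluing sections over a disjoint family of open sets. -/
lemma secSet_iUnion {X : Type*} [TopologicalSpace X] {ι : Type*} (V : ι → Set (X × X))
    (hop : ∀ i, IsOpen (V i)) (hdisj : ∀ i j, i ≠ j → Disjoint (V i) (V j))
    (hsec : ∀ i, SecSet X (V i)) : SecSet X (⋃ i, V i) := by
  classical
  choose s hs using hsec
  set A : Type _ := ((⋃ i, V i : Set (X × X)) : Type _)
  set S : ι → Set A := fun i => (Subtype.val) ⁻¹' (V i) with hS
  have hSopen : ∀ i, IsOpen (S i) := fun i => (hop i).preimage continuous_subtype_val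
  set φ : ∀ i, C(S i, C(I, X)) :=
    fun i => (s i).comp ⟨fun p => ⟨(p.1 : ↥(⋃ i, V i)).1, p.2⟩, Continuous.subtype_mk ((continuous_subtype_val (p := fun x : X × X => x ∈ ⋃ i, V i)).comp continuous_subtype_val) _⟩ with hφdef
  have hφ : ∀ (i j) (x : A) (hxi : x ∈ S i) (hxj : x ∈ S j),
      φ i ⟨x, hxi⟩ = φ j ⟨x, hxj⟩ := by
    intro i j x hxi hxj
    rcases eq_or_ne i j with rfl | hne
    · rfl
    · exact absurd hxj (Set.disjoint_left.mp (hdisj i j hne) hxi)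
  have hnhds : ∀ x : A, ∃ i, S i ∈ nhds x := by
    intro x
    obtain ⟨i, hi⟩ := Set.mem_iUnion.mp x.2
    exact ⟨i, (hSopen i).mem_nhds hi⟩
  refine ⟨ContinuousMap.liftCover S φ hφ hnhds, ?_⟩
  intro p
  obtain ⟨i, hi⟩ := Set.mem_iUnion.mp p.2
  have : ContinuousMap.liftCover S φ hφ hnhds p = φ i ⟨p, hi⟩ :=
    ContinuousMap.liftCover_coe (⟨p, hi⟩ : S i)
  rw [this]
  exact hs i _

end TCProof
namespace TCProof
open Set Metric

/-- Homeomorphism `(W × W) ≃ₜ (Y × Y) × (Z × Z)` induced by `W ≃ₜ Y × Z`. -/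
def pairSwap {W Y Z : Type*} [TopologicalSpace W] [TopologicalSpace Y] [TopologicalSpace Z]
    (f : W ≃ₜ Y × Z) : (W × W) ≃ₜ (Y × Y) × (Z × Z) where
  toFun w := (((f w.1).1, (f w.2).1), ((f w.1).2, (f w.2).2))
  invFun z := (f.symm (z.1.1, z.2.1), f.symm (z.1.2, z.2.2))
  left_inv w := by simp
  right_inv z := by simp
  continuous_toFun := by fun_prop
  continuous_invFun := by fun_prop

lemma secSet_pairSwap_prod {W Y Z : Type*} [TopologicalSpace W] [TopologicalSpace Y]
    [TopologicalSpace Z] (f : W ≃ₜ Y × Z) {U : Set (Y × Y)} {V : Set (Z × Z)}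
    (hU : SecSet Y U) (hV : SecSet Z V) :
    SecSet W ((pairSwap f) ⁻¹' (U ×ˢ V)) := by
  obtain ⟨s, hs⟩ := hU
  obtain ⟨t, ht⟩ := hV
  set T : Set (W × W) := (pairSwap f) ⁻¹' (U ×ˢ V) with hT
  have hmemU : ∀ p : T, (((f p.1.1).1, (f p.1.2).1) : Y × Y) ∈ U := fun p => p.2.1
  have hmemV : ∀ p : T, (((f p.1.1).2, (f p.1.2).2) : Z × Z) ∈ V := fun p => p.2.2
  set u : C(T, U) := ⟨fun p => ⟨((f p.1.1).1, (f p.1.2).1), hmemU p⟩, by fun_prop⟩ with hu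
  set v : C(T, V) := ⟨fun p => ⟨((f p.1.1).2, (f p.1.2).2), hmemV p⟩, by fun_prop⟩ with hv
  set su : C(↥T × ↥I, Y) := (s.comp u).uncurry with hsu
  set tv : C(↥T × ↥I, Z) := (t.comp v).uncurry with htv
  set G : C(↥T × ↥I, W) := ⟨fun q => f.symm (su q, tv q), by fun_prop⟩ with hG
  refine ⟨G.curry, fun p => ?_⟩
  have h1 := hs (u p)
  have h2 := ht (v p)
  have e1 : (s (u p)) 0 = (f p.1.1).1 := congrArg Prod.fst h1
  have e2 : (s (u p)) 1 = (f p.1.2).1 := congrArg Prod.snd h1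
  have e3 : (t (v p)) 0 = (f p.1.1).2 := congrArg Prod.fst h2
  have e4 : (t (v p)) 1 = (f p.1.2).2 := congrArg Prod.snd h2
  have c0 : (G.curry p) 0 = p.1.1 := by
    show f.symm (su (p, 0), tv (p, 0)) = p.1.1
    have : su (p, 0) = (s (u p)) 0 := rfl
    rw [this, e1]
    have : tv (p, 0) = (t (v p)) 0 := rfl
    rw [this, e3]
    simp
  have c1 : (G.curry p) 1 = p.1.2 := by
    show f.symm (su (p, 1), tv (p, 1)) = p.1.2
    have : su (p, 1) = (s (u p)) 1 := rfl
    rw [this, e2]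
    have : tv (p, 1) = (t (v p)) 1 := rfl
    rw [this, e4]
    simp
  rw [c0, c1]

/-- Sections on products of deformable sets. -/
lemma secSet_prod_of_contr {Z : Type*} [TopologicalSpace Z] {z₀ : Z} {U V : Set Z}
    (hU : Contr Z z₀ U) (hV : Contr Z z₀ V) : SecSet Z (U ×ˢ V) := by
  obtain ⟨H, H0, H1⟩ := hU
  obtain ⟨K, K0, K1⟩ := hV
  set T : Set (Z × Z) := U ×ˢ V with hT
  have hmU : ∀ p : T, p.1.1 ∈ U := fun p => p.2.1
  have hmV : ∀ p : T, p.1.2 ∈ V := fun p => p.2.2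
  classical
  set pj : ℝ → ↥I := Set.projIcc 0 1 zero_le_one with hpj
  have hpjc : Continuous pj := continuous_projIcc
  set F1 : ↥T × ↥I → Z := fun q => H (⟨q.1.1.1, hmU q.1⟩, pj (2 * (q.2 : ℝ))) with hF1
  set F2 : ↥T × ↥I → Z := fun q => K (⟨q.1.1.2, hmV q.1⟩, pj (2 - 2 * (q.2 : ℝ))) with hF2
  have hc1 : Continuous F1 := by
    apply H.continuous.comp
    apply Continuous.prodMk
    · exact Continuous.subtype_mk (by fun_prop) _
    · exact hpjc.comp (by fun_prop)
  have hc2 : Continuous F2 := by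
    apply K.continuous.comp
    apply Continuous.prodMk
    · exact Continuous.subtype_mk (by fun_prop) _
    · exact hpjc.comp (by fun_prop)
  set G : ↥T × ↥I → Z := fun q => if ((q.2 : ℝ)) ≤ 1/2 then F1 q else F2 q with hGdef
  have hGcont : Continuous G := by
    apply Continuous.if_le hc1 hc2 (by fun_prop) continuous_const
    intro q hq
    have e1 : (2 : ℝ) * (q.2 : ℝ) = 1 := by rw [hq]; ring
    have e2 : (2 : ℝ) - 2 * (q.2 : ℝ) = 1 := by rw [hq]; ring
    have hp1 : pj 1 = 1 := by rw [hpj]; simp [Set.projIcc_right]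
    rw [hF1, hF2]
    simp only [e1, hp1]
    rw [H1]
    have e3 : (2:ℝ) - 1 = 1 := by norm_num
    rw [e3, hp1, K1]
  have hp0 : pj 0 = 0 := by rw [hpj]; simp [Set.projIcc_left]
  refine ⟨(ContinuousMap.mk G hGcont).curry, fun p => ?_⟩
  have c0 : ((ContinuousMap.mk G hGcont).curry p) 0 = p.1.1 := by
    show G (p, 0) = p.1.1
    rw [hGdef]
    simp only []
    rw [if_pos (by norm_num : ((((0:↥I)) : ℝ)) ≤ 1/2)]
    rw [hF1]
    simp only []
    have : (2 : ℝ) * (((0:↥I)) : ℝ) = 0 := by norm_num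
    rw [this, hp0]
    exact H0 _
  have c1 : ((ContinuousMap.mk G hGcont).curry p) 1 = p.1.2 := by
    show G (p, 1) = p.1.2
    rw [hGdef]
    simp only []
    rw [if_neg (by norm_num : ¬((((1:↥I)) : ℝ) ≤ 1/2))]
    rw [hF2]
    simp only []
    have : (2 : ℝ) - 2 * (((1:↥I)) : ℝ) = 0 := by norm_num
    rw [this, hp0]
    exact K0 _
  rw [c0, c1]

/-- A system of `N` families of disjoint open pieces with property `Q`,
each point lying in pieces from at least `m` families. -/
def PieceFam (Z : Type*) [TopologicalSpace Z] (Q : Set Z → Prop) (N m : ℕ) : Prop :=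
  ∃ (ι : Fin N → Type) (V : ∀ r, ι r → Set Z),
    (∀ r t, IsOpen (V r t)) ∧ (∀ r, ∀ t t' : ι r, t ≠ t' → Disjoint (V r t) (V r t')) ∧
    (∀ r t, Q (V r t)) ∧
    ∀ z : Z, ∃ R : Finset (Fin N), m ≤ R.card ∧ ∀ r ∈ R, ∃ t, z ∈ V r t

lemma combine {W Z₁ Z₂ : Type*} [TopologicalSpace W] [TopologicalSpace Z₁] [TopologicalSpace Z₂]
    (e : (W × W) ≃ₜ Z₁ × Z₂) {Q₁ : Set Z₁ → Prop} {Q₂ : Set Z₂ → Prop} {N a b : ℕ}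
    (hA : PieceFam Z₁ Q₁ N a) (hB : PieceFam Z₂ Q₂ N b) (hN : N < a + b)
    (rule : ∀ U V, IsOpen U → IsOpen V → Q₁ U → Q₂ V → SecSet W (e ⁻¹' (U ×ˢ V))) :
    HasMotionCover W N := by
  classical
  obtain ⟨ι₁, V₁, hop₁, hdisj₁, hQ₁, hm₁⟩ := hA
  obtain ⟨ι₂, V₂, hop₂, hdisj₂, hQ₂, hm₂⟩ := hB
  refine ⟨fun r => ⋃ t : ι₁ r × ι₂ r, e ⁻¹' (V₁ r t.1 ×ˢ V₂ r t.2), ?_, ?_, ?_⟩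
  · intro r
    exact isOpen_iUnion fun t =>
      ((hop₁ r t.1).prod (hop₂ r t.2)).preimage e.continuous
  · rw [Set.eq_univ_iff_forall]
    intro z
    obtain ⟨R₁, hc₁, hR₁⟩ := hm₁ (e z).1
    obtain ⟨R₂, hc₂, hR₂⟩ := hm₂ (e z).2
    have hinter : (R₁ ∩ R₂).Nonempty := by
      by_contra h
      rw [Finset.not_nonempty_iff_eq_empty] at h
      have := Finset.card_union_add_card_inter R₁ R₂
      rw [h] at this
      simp only [Finset.card_empty, Nat.add_zero] at this
      have hle : (R₁ ∪ R₂).card ≤ N := by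
        simpa using Finset.card_le_card (Finset.subset_univ (R₁ ∪ R₂))
      omega
    obtain ⟨r, hr⟩ := hinter
    obtain ⟨t₁, ht₁⟩ := hR₁ r (Finset.mem_inter.mp hr).1
    obtain ⟨t₂, ht₂⟩ := hR₂ r (Finset.mem_inter.mp hr).2
    exact Set.mem_iUnion.mpr ⟨r, Set.mem_iUnion.mpr ⟨(t₁, t₂), ⟨ht₁, ht₂⟩⟩⟩
  · intro r
    have := secSet_iUnion (X := W) (fun t : ι₁ r × ι₂ r => e ⁻¹' (V₁ r t.1 ×ˢ V₂ r t.2))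
      (fun t => ((hop₁ r t.1).prod (hop₂ r t.2)).preimage e.continuous)
      (fun t t' hne => by
        apply Set.disjoint_left.mpr
        intro x hx hx'
        rcases Prod.mk.injEq .. ▸ (fun h => h) (show t = t' → False from hne) with _
        by_cases h1 : t.1 = t'.1
        · have h2 : t.2 ≠ t'.2 := fun h2 => hne (Prod.ext h1 h2)
          exact Set.disjoint_left.mp (hdisj₂ r t.2 t'.2 h2) hx.2 hx'.2
        · exact Set.disjoint_left.mp (hdisj₁ r t.1 t'.1 h1) hx.1 hx'.1)
      (fun t => rule _ _ (hop₁ r t.1) (hop₂ r t.2) (hQ₁ r t.1) (hQ₂ r t.2))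
    exact this

end TCProof
namespace TCProof
open Set Metric

lemma thresh {Z : Type*} [MetricSpace Z] {Q : Set Z → Prop}
    (hQ : ∀ U V : Set Z, V ⊆ U → Q U → Q V)
    {k : ℕ} (U : Fin k → Set Z) (hop : ∀ i, IsOpen (U i)) (hcov : (⋃ i, U i) = Set.univ)
    (hdec : ∀ i, ∃ (ι : Type) (V : ι → Set Z), (∀ t, IsOpen (V t)) ∧
      (∀ t t', t ≠ t' → Disjoint (V t) (V t')) ∧ (∀ t, Q (V t)) ∧ (⋃ t, V t) = U i)
    (N : ℕ) : PieceFam Z Q N (N - (k - 1)) := by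
  classical
  choose ιd Vd hVdop hVddisj hVdQ hVdU using hdec
  set f : Fin k → Z → ℝ := fun i =>
    if (U i)ᶜ = ∅ then (fun _ => 1) else (fun z => infDist z (U i)ᶜ) with hf
  have hfcont : ∀ i, Continuous (f i) := by
    intro i; rw [hf]; dsimp only; split_ifs
    · exact continuous_const
    · exact continuous_infDist_pt _
  have hfnonneg : ∀ i z, 0 ≤ f i z := by
    intro i z; rw [hf]; dsimp only; split_ifs
    · norm_num
    · exact infDist_nonneg
  have hfpos : ∀ i z, z ∈ U i → 0 < f i z := by
    intro i z hz; rw [hf]; dsimp only; split_ifs with h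
    · norm_num
    · rw [← (hop i).isClosed_compl.notMem_iff_infDist_pos (Set.nonempty_iff_ne_empty.mpr h)]
      simpa using hz
  have hfmem : ∀ i z, 0 < f i z → z ∈ U i := by
    intro i z hz; rw [hf] at hz; dsimp only at hz; split_ifs at hz with h
    · have hU : U i = Set.univ := by rw [← Set.compl_empty_iff]; exact h
      rw [hU]; trivial
    · by_contra hmem
      have hz' : 0 < infDist z (U i)ᶜ := hz
      rw [infDist_zero_of_mem ((Set.mem_compl_iff _ _).mpr hmem)] at hz'
      exact lt_irrefl _ hz'
  set Sm : Z → ℝ := fun z => ∑ i, f i z with hSm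
  have hSmpos : ∀ z, 0 < Sm z := by
    intro z
    have hz : z ∈ ⋃ i, U i := by rw [hcov]; trivial
    obtain ⟨i, hi⟩ := Set.mem_iUnion.mp hz
    exact Finset.sum_pos' (fun j _ => hfnonneg j z) ⟨i, Finset.mem_univ i, hfpos i z hi⟩
  have hSmcont : Continuous Sm :=
    continuous_finset_sum _ fun i _ => hfcont i
  set g : Fin k → Z → ℝ := fun i z => f i z / Sm z with hg
  have hgcont : ∀ i, Continuous (g i) := fun i =>
    (hfcont i).div hSmcont fun z => (hSmpos z).ne'
  have hgmem : ∀ i z, 0 < g i z → z ∈ U i := by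
    intro i z hz
    apply hfmem i z
    have := mul_pos hz (hSmpos z)
    rwa [hg, div_mul_cancel₀ _ (hSmpos z).ne'] at this
  have hgsum : ∀ z, ∑ i, g i z = 1 := by
    intro z
    rw [hg]
    dsimp only
    rw [← Finset.sum_div]
    exact div_self (hSmpos z).ne'
  set θ : Fin N → ℝ := fun r => ((r : ℕ) + 1) / (((N : ℝ) + 1) * k) with hθ
  -- the pieces
  refine ⟨fun _ => (Σ S : {S : Finset (Fin k) // S.Nonempty}, ιd (S.1.min' S.2)),
    fun r p => ({z | ∀ i ∈ p.1.1, θ r < g i z} ∩ {z | ∀ i, i ∉ p.1.1 → g i z < θ r})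
      ∩ Vd (p.1.1.min' p.1.2) p.2, ?_, ?_, ?_, ?_⟩
  · rintro r ⟨S, t⟩
    refine IsOpen.inter (IsOpen.inter ?_ ?_) (hVdop _ _)
    · have he : {z | ∀ i ∈ S.1, θ r < g i z} = ⋂ i ∈ S.1, {z | θ r < g i z} := by
        ext z; simp
      rw [he]
      exact isOpen_biInter_finset fun i _ => isOpen_lt continuous_const (hgcont i)
    · have he : {z | ∀ i, i ∉ S.1 → g i z < θ r}
          = ⋂ i ∈ Finset.univ \ S.1, {z | g i z < θ r} := by
        ext z; simp
      rw [he]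
      exact isOpen_biInter_finset fun i _ => isOpen_lt (hgcont i) continuous_const
  · rintro r ⟨S, t⟩ ⟨S', t'⟩ hne
    by_cases hS : S = S'
    · subst hS
      have ht : t ≠ t' := by
        intro hh; exact hne (by rw [hh])
      exact (hVddisj _ t t' ht).mono Set.inter_subset_right Set.inter_subset_right
    · have hSS : S.1 ≠ S'.1 := fun hh => hS (Subtype.ext hh)
      obtain ⟨i, hi⟩ : ∃ i, ¬(i ∈ S.1 ↔ i ∈ S'.1) := by
        by_contra hc
        push_neg at hc
        exact hSS (Finset.ext fun i => hc i)
      rw [iff_iff_implies_and_implies, not_and_or] at hi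
      apply Set.disjoint_left.mpr
      intro z hz hz'
      rcases hi with hi | hi
      · push_neg at hi
        have h1 : θ r < g i z := hz.1.1 i hi.1
        have h2 : g i z < θ r := hz'.1.2 i hi.2
        exact absurd h1 (not_lt.mpr h2.le)
      · push_neg at hi
        have h1 : θ r < g i z := hz'.1.1 i hi.1
        have h2 : g i z < θ r := hz.1.2 i hi.2
        exact absurd h1 (not_lt.mpr h2.le)
  · rintro r ⟨S, t⟩
    exact hQ _ _ Set.inter_subset_right (hVdQ _ t)
  · intro z
    have hz : z ∈ ⋃ i, U i := by rw [hcov]; trivial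
    obtain ⟨i₀, hi₀⟩ := Set.mem_iUnion.mp hz
    have hk1 : 1 ≤ k := by have := i₀.isLt; omega
    have hkR : (0:ℝ) < (k:ℝ) := by exact_mod_cast hk1
    have hden : (0:ℝ) < ((N : ℝ) + 1) * k := by positivity
    have hθpos : ∀ r, 0 < θ r := by
      intro r; rw [hθ]; positivity
    have hθlt : ∀ r : Fin N, θ r < 1 / k := by
      intro r
      rw [hθ, div_lt_div_iff₀ hden hkR]
      have hrN : ((r : ℕ) : ℝ) + 1 ≤ (N : ℝ) := by
        have := r.isLt
        exact_mod_cast this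
      rw [one_mul]
      apply mul_lt_mul_of_pos_right _ hkR
      linarith
    have hθinj : ∀ r r' : Fin N, θ r = θ r' → r = r' := by
      intro r r' hrr
      rw [hθ] at hrr
      dsimp only at hrr
      rw [div_eq_div_iff hden.ne' hden.ne'] at hrr
      have h1 : ((r : ℕ) : ℝ) + 1 = ((r' : ℕ) : ℝ) + 1 := mul_right_cancel₀ hden.ne' hrr
      have h2 : (r : ℕ) + 1 = (r' : ℕ) + 1 := by exact_mod_cast h1
      have h2 : (r : ℕ) = (r' : ℕ) := by omega
      exact Fin.ext h2
    obtain ⟨istar, histar⟩ : ∃ i, 1 / (k:ℝ) ≤ g i z := by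
      by_contra hc
      push_neg at hc
      have hlt : ∑ i, g i z < ∑ _i : Fin k, 1 / (k:ℝ) :=
        Finset.sum_lt_sum_of_nonempty ⟨i₀, Finset.mem_univ i₀⟩ fun i _ => hc i
      rw [hgsum z, Finset.sum_const, Finset.card_univ, Fintype.card_fin] at hlt
      rw [nsmul_eq_mul, mul_one_div, div_self hkR.ne'] at hlt
      exact lt_irrefl _ hlt
    set bad : Finset (Fin N) := Finset.univ.filter (fun r => ∃ i, g i z = θ r) with hbad
    have hbadcard : bad.card ≤ k - 1 := by
      have hmap : ∀ r ∈ bad, (if h : ∃ i, g i z = θ r then h.choose else i₀)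
          ∈ Finset.univ.erase istar := by
        intro r hr
        have hex : ∃ i, g i z = θ r := (Finset.mem_filter.mp hr).2
        rw [dif_pos hex]
        apply Finset.mem_erase.mpr
        refine ⟨?_, Finset.mem_univ _⟩
        intro hh
        have := hex.choose_spec
        rw [hh] at this
        have h1 : θ r < 1 / (k:ℝ) := hθlt r
        rw [← this] at h1
        exact absurd histar (not_le.mpr h1)
      have hinj : ∀ r ∈ bad, ∀ r' ∈ bad,
          (if h : ∃ i, g i z = θ r then h.choose else i₀)
            = (if h : ∃ i, g i z = θ r' then h.choose else i₀) → r = r' := by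
        intro r hr r' hr' heq
        have hex : ∃ i, g i z = θ r := (Finset.mem_filter.mp hr).2
        have hex' : ∃ i, g i z = θ r' := (Finset.mem_filter.mp hr').2
        rw [dif_pos hex, dif_pos hex'] at heq
        apply hθinj
        rw [← hex.choose_spec, ← hex'.choose_spec, heq]
      have := Finset.card_le_card_of_injOn _ hmap hinj
      rwa [Finset.card_erase_of_mem (Finset.mem_univ _), Finset.card_univ,
        Fintype.card_fin] at this
    refine ⟨Finset.univ \ bad, ?_, ?_⟩
    · rw [Finset.card_sdiff_of_subset (Finset.subset_univ _), Finset.card_univ, Fintype.card_fin]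
      omega
    · intro r hr
      have hgood : ¬ ∃ i, g i z = θ r := by
        rw [Finset.mem_sdiff] at hr
        intro hc
        exact hr.2 (Finset.mem_filter.mpr ⟨Finset.mem_univ _, hc⟩)
      push_neg at hgood
      set Sr : Finset (Fin k) := Finset.univ.filter (fun i => θ r < g i z) with hSr
      have hSrne : Sr.Nonempty :=
        ⟨istar, Finset.mem_filter.mpr ⟨Finset.mem_univ _, lt_of_lt_of_le (hθlt r) histar⟩⟩
      have hzmin : z ∈ U (Sr.min' hSrne) := by
        have hmem := Sr.min'_mem hSrne
        have h2 := (Finset.mem_filter.mp hmem).2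
        exact hgmem _ z (lt_trans (hθpos r) h2)
      rw [← hVdU] at hzmin
      obtain ⟨t, hzt⟩ := Set.mem_iUnion.mp hzmin
      refine ⟨⟨⟨Sr, hSrne⟩, t⟩, ⟨⟨?_, ?_⟩, hzt⟩⟩
      · intro i hi
        exact (Finset.mem_filter.mp hi).2
      · intro i hi
        have hle : ¬ θ r < g i z := by
          intro hc
          exact hi (Finset.mem_filter.mpr ⟨Finset.mem_univ _, hc⟩)
        exact lt_of_le_of_ne (not_lt.mp hle) (hgood i)
end TCProof
namespace TCProof
open Set Complex

/-- The nonzero complex numbers. -/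
abbrev Cx : Type := {z : ℂ // z ≠ 0}

noncomputable def ang (N : ℕ) (r : Fin N) : ℝ := 2 * Real.pi * r / N

noncomputable def Dir (N : ℕ) (r : Fin N) : Set (Cx × Cx) :=
  {p | Complex.exp (-((ang N r : ℝ) * Complex.I)) * (p.2.1 / p.1.1) ∈ Complex.slitPlane}

lemma dir_open (N : ℕ) (r : Fin N) : IsOpen (Dir N r) := by
  apply Complex.isOpen_slitPlane.preimage
  exact continuous_const.mul ((continuous_subtype_val.comp continuous_snd).div
    (continuous_subtype_val.comp continuous_fst) fun p => p.1.2)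

lemma dir_secSet (N : ℕ) (r : Fin N) : SecSet Cx (Dir N r) := by
  classical
  set T : Set (Cx × Cx) := Dir N r with hTdef
  set a : ℂ := (ang N r : ℝ) * Complex.I with ha
  set u : ↥T → ℂ := fun p => Complex.exp (-a) * (p.1.2.1 / p.1.1.1) with hu
  have humem : ∀ p : T, u p ∈ Complex.slitPlane := fun p => p.2
  have hune : ∀ p : T, u p ≠ 0 := fun p => Complex.slitPlane_ne_zero (humem p)
  have hucont : Continuous u := by
    apply continuous_const.mul
    exact ((continuous_subtype_val.comp (continuous_snd.comp continuous_subtype_val)).div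
      (continuous_subtype_val.comp (continuous_fst.comp continuous_subtype_val))
      fun p => p.1.1.2)
  have hlogcont : Continuous fun p : ↥T => Complex.log (u p) := by
    rw [continuous_iff_continuousAt]
    intro p
    exact (continuousAt_clog (humem p)).comp hucont.continuousAt
  set G : ↥T × ↥I → Cx := fun q =>
    ⟨q.1.1.1.1 * Complex.exp (((q.2 : ℝ) : ℂ) * (a + Complex.log (u q.1))),
      mul_ne_zero q.1.1.1.2 (Complex.exp_ne_zero _)⟩ with hG
  have hGcont : Continuous G := by
    apply Continuous.subtype_mk
    apply Continuous.mul
    · exact continuous_subtype_val.comp (continuous_fst.comp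
        (continuous_subtype_val.comp continuous_fst))
    · apply Complex.continuous_exp.comp
      apply Continuous.mul
      · exact (Complex.continuous_ofReal.comp continuous_subtype_val).comp continuous_snd
      · exact (continuous_const.add hlogcont).comp continuous_fst
  refine ⟨(ContinuousMap.mk G hGcont).curry, fun p => ?_⟩
  have c0 : ((ContinuousMap.mk G hGcont).curry p) 0 = p.1.1 := by
    show G (p, 0) = p.1.1
    apply Subtype.ext
    show (p.1.1.1 : ℂ) * Complex.exp ((((0:↥I) : ℝ) : ℂ) * (a + Complex.log (u p))) = p.1.1.1
    norm_num
  have c1 : ((ContinuousMap.mk G hGcont).curry p) 1 = p.1.2 := by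
    show G (p, 1) = p.1.2
    apply Subtype.ext
    show (p.1.1.1 : ℂ) * Complex.exp ((((1:↥I) : ℝ) : ℂ) * (a + Complex.log (u p))) = p.1.2.1
    have h1 : (((1:↥I) : ℝ) : ℂ) = 1 := by norm_num
    rw [h1, one_mul, Complex.exp_add, Complex.exp_log (hune p)]
    rw [hu]
    have hz : (p.1.1.1 : ℂ) ≠ 0 := p.1.1.2
    field_simp
    rw [← Complex.exp_add, add_neg_cancel, Complex.exp_zero, one_mul]
  rw [c0, c1]

lemma dir_mult (N : ℕ) (p : Cx × Cx) :
    ∃ R : Finset (Fin N), N - 1 ≤ R.card ∧ ∀ r ∈ R, p ∈ Dir N r := by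
  classical
  set v : ℂ := p.2.1 / p.1.1 with hv
  have hvne : v ≠ 0 := div_ne_zero p.2.2 p.1.2
  have key : ∀ r r' : Fin N, p ∉ Dir N r → p ∉ Dir N r' → r = r' := by
    intro r r' hr hr'
    have h1 : Complex.exp (-((ang N r : ℝ) * Complex.I)) * v ∉ Complex.slitPlane := hr
    have h2 : Complex.exp (-((ang N r' : ℝ) * Complex.I)) * v ∉ Complex.slitPlane := hr'
    rw [Complex.mem_slitPlane_iff] at h1 h2
    push_neg at h1 h2
    set t : ℂ := Complex.exp (-((ang N r : ℝ) * Complex.I)) * v with ht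
    set t' : ℂ := Complex.exp (-((ang N r' : ℝ) * Complex.I)) * v with ht'
    have htne : t ≠ 0 := mul_ne_zero (Complex.exp_ne_zero _) hvne
    have ht'ne : t' ≠ 0 := mul_ne_zero (Complex.exp_ne_zero _) hvne
    -- t and t' are nonpositive reals with the same absolute value
    have habs : ‖t‖ = ‖t'‖ := by
      rw [ht, ht', norm_mul, norm_mul]
      have e1 : ‖Complex.exp (-((ang N r : ℝ) * Complex.I))‖ = 1 := by
        rw [show (-((ang N r : ℝ) * Complex.I) : ℂ) = ((-(ang N r) : ℝ) : ℂ) * Complex.I by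
          push_cast; ring]
        exact Complex.norm_exp_ofReal_mul_I _
      have e2 : ‖Complex.exp (-((ang N r' : ℝ) * Complex.I))‖ = 1 := by
        rw [show (-((ang N r' : ℝ) * Complex.I) : ℂ) = ((-(ang N r') : ℝ) : ℂ) * Complex.I by
          push_cast; ring]
        exact Complex.norm_exp_ofReal_mul_I _
      rw [e1, e2]
    have hteq : t = t' := by
      have hre : t = (t.re : ℂ) := by
        apply Complex.ext <;> simp [h1.2]
      have hre' : t' = (t'.re : ℂ) := by
        apply Complex.ext <;> simp [h2.2]
      have habs' : |t.re| = |t'.re| := by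
        have a1 : ‖t‖ = |t.re| := by rw [hre]; exact (Complex.norm_real _).trans (Real.norm_eq_abs _)
        have a2 : ‖t'‖ = |t'.re| := by rw [hre']; exact (Complex.norm_real _).trans (Real.norm_eq_abs _)
        rw [← a1, ← a2, habs]
      have hrle : t.re ≤ 0 := h1.1
      have hrle' : t'.re ≤ 0 := h2.1
      rw [abs_of_nonpos hrle, abs_of_nonpos hrle'] at habs'
      have : t.re = t'.re := by linarith
      rw [hre, hre', this]
    have hexp : Complex.exp (-((ang N r : ℝ) * Complex.I))
        = Complex.exp (-((ang N r' : ℝ) * Complex.I)) := by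
      have := hteq
      rw [ht, ht'] at this
      exact mul_right_cancel₀ hvne this
    rw [Complex.exp_eq_exp_iff_exists_int] at hexp
    obtain ⟨m, hm⟩ := hexp
    -- compare imaginary parts
    have him : -(ang N r) = -(ang N r') + m * (2 * Real.pi) := by
      have := congrArg Complex.im hm
      simpa using this
    have hπ : Real.pi ≠ 0 := Real.pi_ne_zero
    rw [ang, ang] at him
    have hNne : (N : ℝ) ≠ 0 := by
      have : 0 < N := r.pos
      positivity
    have h2 : ((r':ℝ)/N - (r:ℝ)/N) = m := by
      have hp : (0:ℝ) < 2*Real.pi := by positivity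
      apply mul_left_cancel₀ hp.ne'
      ring_nf
      ring_nf at him
      linarith
    have hrr : (r' : ℝ) - (r : ℝ) = m * N := by
      field_simp at h2
      linarith
    have hint : (r' : ℤ) - (r : ℤ) = m * N := by exact_mod_cast hrr
    have hb1 : (r : ℤ) < N := by exact_mod_cast r.isLt
    have hb2 : (r' : ℤ) < N := by exact_mod_cast r'.isLt
    have hb3 : (0:ℤ) ≤ (r : ℤ) := Int.ofNat_nonneg _
    have hb4 : (0:ℤ) ≤ (r' : ℤ) := Int.ofNat_nonneg _
    have hm0 : m = 0 := by
      rcases lt_trichotomy m 0 with h | h | h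
      · nlinarith [hint]
      · exact h
      · nlinarith [hint]
    rw [hm0] at hint
    apply Fin.ext
    omega
  by_cases hb : ∃ r : Fin N, p ∉ Dir N r
  · obtain ⟨r₀, hr₀⟩ := hb
    refine ⟨Finset.univ.erase r₀, ?_, ?_⟩
    · rw [Finset.card_erase_of_mem (Finset.mem_univ _), Finset.card_univ, Fintype.card_fin]
    · intro r hr
      by_contra hc
      exact (Finset.mem_erase.mp hr).1 (key r r₀ hc hr₀)
  · push_neg at hb
    exact ⟨Finset.univ, by simp, fun r _ => hb r⟩

lemma dir_pieceFam (N : ℕ) : PieceFam (Cx × Cx) (SecSet Cx) N (N - 1) := by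
  refine ⟨fun _ => PUnit, fun r _ => Dir N r, fun r _ => dir_open N r, ?_, fun r _ => dir_secSet N r, ?_⟩
  · intro r t t' hne
    exact absurd rfl hne
  · intro p
    obtain ⟨R, hc, hR⟩ := dir_mult N p
    exact ⟨R, hc, fun r hr => ⟨PUnit.unit, hR r hr⟩⟩

lemma univ_secSet_C : SecSet ℂ (Set.univ : Set (ℂ × ℂ)) := by
  set G : ↥(Set.univ : Set (ℂ × ℂ)) × ↥I → ℂ :=
    fun q => q.1.1.1 + ((q.2 : ℝ) : ℂ) * (q.1.1.2 - q.1.1.1) with hG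
  have hGcont : Continuous G := by fun_prop
  refine ⟨(ContinuousMap.mk G hGcont).curry, fun p => ?_⟩
  have c0 : ((ContinuousMap.mk G hGcont).curry p) 0 = p.1.1 := by
    show G (p, 0) = p.1.1
    rw [hG]; norm_num
  have c1 : ((ContinuousMap.mk G hGcont).curry p) 1 = p.1.2 := by
    show G (p, 1) = p.1.2
    rw [hG]; norm_num
  rw [c0, c1]

lemma univ_pieceFam_C (N : ℕ) : PieceFam (ℂ × ℂ) (SecSet ℂ) N N := by
  refine ⟨fun _ => PUnit, fun _ _ => Set.univ, fun _ _ => isOpen_univ, ?_,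
    fun _ _ => univ_secSet_C, ?_⟩
  · intro r t t' hne
    exact absurd rfl hne
  · intro p
    exact ⟨Finset.univ, by simp, fun r _ => ⟨PUnit.unit, trivial⟩⟩

end TCProof
namespace TCProof
open Set Complex Equiv

section Geometry

variable {n : ℕ}

/-- block index of a position, given the set `b` of block-starting positions. -/
def blk (b : Finset (Fin n)) (p : Fin n) : ℕ := (b.filter (fun q => q ≤ p)).card

/-- predecessor position -/
def pr (q : Fin n) : Fin n := ⟨q.1 - 1, lt_of_le_of_lt (Nat.sub_le _ _) q.2⟩

lemma blk_mono (b : Finset (Fin n)) {p q : Fin n} (h : p ≤ q) : blk b p ≤ blk b q := by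
  apply Finset.card_le_card
  intro r hr
  rw [Finset.mem_filter] at hr ⊢
  exact ⟨hr.1, le_trans hr.2 h⟩

lemma blk_pr (b : Finset (Fin n)) {q : Fin n} (hq : q.1 ≠ 0) :
    blk b q = blk b (pr q) + (if q ∈ b then 1 else 0) := by
  classical
  have hq1 : (pr q).1 = q.1 - 1 := rfl
  have hsplit : b.filter (fun r => r ≤ q)
      = if q ∈ b then insert q (b.filter (fun r => r ≤ pr q)) else b.filter (fun r => r ≤ pr q) := by
    split_ifs with h
    · ext r
      simp only [Finset.mem_filter, Finset.mem_insert]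
      constructor
      · rintro ⟨hrb, hrq⟩
        rcases eq_or_ne r q with rfl | hne
        · exact Or.inl rfl
        · refine Or.inr ⟨hrb, ?_⟩
          have : r.1 ≠ q.1 := fun hh => hne (Fin.ext hh)
          have h1 : r.1 ≤ q.1 := hrq
          show r.1 ≤ q.1 - 1
          omega
      · rintro (rfl | ⟨hrb, hrq⟩)
        · exact ⟨h, le_refl _⟩
        · refine ⟨hrb, ?_⟩
          have h1 : r.1 ≤ q.1 - 1 := hrq
          show r.1 ≤ q.1
          omega
    · ext r
      simp only [Finset.mem_filter]
      constructor
      · rintro ⟨hrb, hrq⟩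
        refine ⟨hrb, ?_⟩
        have hne : r ≠ q := fun hh => h (hh ▸ hrb)
        have : r.1 ≠ q.1 := fun hh => hne (Fin.ext hh)
        have h1 : r.1 ≤ q.1 := hrq
        show r.1 ≤ q.1 - 1
        omega
      · rintro ⟨hrb, hrq⟩
        have h1 : r.1 ≤ q.1 - 1 := hrq
        exact ⟨hrb, by show r.1 ≤ q.1; omega⟩
  rw [blk, hsplit]
  split_ifs with h
  · rw [Finset.card_insert_of_notMem]
    · rfl
    · intro hc
      have := (Finset.mem_filter.mp hc).2
      have h1 : q.1 ≤ q.1 - 1 := this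
      omega
  · rfl

lemma blk_zero_mem {b : Finset (Fin n)} {z : Fin n} (hz : z.1 = 0) (h0 : z ∈ b) :
    blk b z = 1 := by
  rw [blk]
  have : b.filter (fun q => q ≤ z) = {z} := by
    ext r
    simp only [Finset.mem_filter, Finset.mem_singleton]
    constructor
    · rintro ⟨hrb, hrz⟩
      have : r.1 ≤ z.1 := hrz
      apply Fin.ext
      omega
    · rintro rfl
      exact ⟨h0, le_refl _⟩
  rw [this, Finset.card_singleton]

lemma blk_pos {b : Finset (Fin n)} {z : Fin n} (hz : z.1 = 0) (h0 : z ∈ b) (p : Fin n) :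
    1 ≤ blk b p := by
  have h1 : z ≤ p := by show z.1 ≤ p.1; omega
  have := blk_mono b h1
  rw [blk_zero_mem hz h0] at this
  exact this

lemma blk_le_card (b : Finset (Fin n)) (p : Fin n) : blk b p ≤ b.card :=
  Finset.card_le_card (Finset.filter_subset _ _)

lemma blk_last {b : Finset (Fin n)} (hn : 0 < n) : blk b ⟨n-1, by omega⟩ = b.card := by
  rw [blk]
  congr 1
  apply Finset.filter_true_of_mem
  intro q _
  show q.1 ≤ n - 1
  have := q.2
  omega

lemma blk_ivt (b : Finset (Fin n)) (p q : Fin n) (hpq : p ≤ q) (v : ℕ)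
    (h1 : blk b p ≤ v) (h2 : v ≤ blk b q) : ∃ u : Fin n, p ≤ u ∧ u ≤ q ∧ blk b u = v := by
  obtain ⟨d, hd⟩ : ∃ d, q.1 - p.1 = d := ⟨_, rfl⟩
  induction d generalizing q with
  | zero =>
    have : p = q := by
      apply Fin.ext
      have hle : p.1 ≤ q.1 := hpq
      omega
    subst this
    exact ⟨p, le_refl _, le_refl _, le_antisymm h1 h2⟩
  | succ d ih =>
    have hq0 : q.1 ≠ 0 := by
      have hle : p.1 ≤ q.1 := hpq
      omega
    by_cases hc : v ≤ blk b (pr q)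
    · obtain ⟨u, hu1, hu2, hu3⟩ := ih (pr q) (by show p.1 ≤ q.1 - 1; have : p.1 ≤ q.1 := hpq; omega)
        hc (by show (pr q).1 - p.1 = d; show q.1 - 1 - p.1 = d; omega)
      exact ⟨u, hu1, le_trans hu2 (by show q.1 - 1 ≤ q.1; omega), hu3⟩
    · push_neg at hc
      have hstep := blk_pr b hq0
      have : blk b q = v := by
        split_ifs at hstep with h
        · omega
        · omega
      exact ⟨q, hpq, le_refl _, this⟩

variable (hn : 2 ≤ n)

def ii0 : Fin n := ⟨0, by omega⟩
def ii1 : Fin n := ⟨1, by omega⟩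

/-- normalized configuration space: injective, with `x 0 = 0`, `x 1 = 1`. -/
def Mhat : Type :=
  {x : Fin n → ℂ // Function.Injective x ∧ x (ii0 hn) = 0 ∧ x (ii1 hn) = 1}

instance : TopologicalSpace (Mhat hn) :=
  inferInstanceAs (TopologicalSpace {x : Fin n → ℂ // _})

noncomputable instance : MetricSpace (Mhat hn) :=
  inferInstanceAs (MetricSpace {x : Fin n → ℂ // _})

def basept : Mhat hn :=
  ⟨fun i => ((i : ℕ) : ℂ), by
    constructor
    · intro i j hij
      have : ((i : ℕ) : ℂ) = ((j : ℕ) : ℂ) := hij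
      have : (i : ℕ) = (j : ℕ) := by exact_mod_cast this
      exact Fin.ext this
    constructor
    · show (((ii0 hn : Fin n) : ℕ) : ℂ) = 0
      norm_num [ii0]
    · show (((ii1 hn : Fin n) : ℕ) : ℂ) = 1
      norm_num [ii1]⟩

/-- conditions defining a piece -/
def PieceCond (sg : Equiv.Perm (Fin n)) (b : Finset (Fin n)) (x : Fin n → ℂ) : Prop :=
  (∀ p q : Fin n, p < q → blk b p = blk b q → (x (sg p)).im < (x (sg q)).im) ∧
  (∀ p q p' q' : Fin n, blk b p = blk b q → blk b q' = blk b p' + 1 →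
    3 * |(x (sg p)).re - (x (sg q)).re| < (x (sg q')).re - (x (sg p')).re)

/-- the key chained separation estimate -/
lemma cross {sg : Equiv.Perm (Fin n)} {b : Finset (Fin n)} {x : Fin n → ℂ}
    (hx : PieceCond sg b x) :
    ∀ a c p q : Fin n, blk b a = blk b c → blk b p < blk b q →
      3 * |(x (sg a)).re - (x (sg c)).re| < (x (sg q)).re - (x (sg p)).re := by
  have main : ∀ m : ℕ, ∀ p q : Fin n, blk b p < blk b q → blk b q - blk b p ≤ m →
      ∀ a c : Fin n, blk b a = blk b c →
      3 * |(x (sg a)).re - (x (sg c)).re| < (x (sg q)).re - (x (sg p)).re := by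
    intro m
    induction m with
    | zero => intro p q h1 h2; omega
    | succ m ih =>
      intro p q h1 h2 a c hac
      by_cases hcase : blk b q = blk b p + 1
      · exact hx.2 a c p q hac hcase
      · have hpq : p ≤ q := by
          by_contra hcon
          push_neg at hcon
          exact absurd (blk_mono b hcon.le) (by omega)
        obtain ⟨u, _, _, hu3⟩ := blk_ivt b p q hpq (blk b p + 1) (by omega) (by omega)
        have e1 : 3 * |(x (sg a)).re - (x (sg c)).re| < (x (sg u)).re - (x (sg p)).re :=
          hx.2 a c p u hac hu3
        have e2 : 0 < (x (sg q)).re - (x (sg u)).re := by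
          have h3 := ih u q (by omega) (by omega) a a rfl
          have h4 : (0:ℝ) ≤ 3 * |(x (sg a)).re - (x (sg a)).re| := by positivity
          linarith
        linarith
  intro a c p q hac hpq
  exact main (blk b q - blk b p) p q hpq (le_refl _) a c hac

end Geometry
end TCProof
namespace TCProof
open Set Complex Equiv

section Geometry2

variable {n : ℕ}

noncomputable def qsg (sg : Equiv.Perm (Fin n)) : Fin n → ℂ := fun i => (((sg.symm i : Fin n) : ℕ) : ℂ)

noncomputable def linmap (sg : Equiv.Perm (Fin n)) (x : Fin n → ℂ) (t : ℝ) : Fin n → ℂ :=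
  fun i => ((1 - t : ℝ) : ℂ) * x i + ((t : ℝ) : ℂ) * qsg sg i

noncomputable def gam (sg : Equiv.Perm (Fin n)) (τ : ℝ) : Fin n → ℂ :=
  fun i => (((1 - τ) * ((sg.symm i : Fin n) : ℕ) + τ * (i : ℕ) : ℝ) : ℂ)
    + Complex.I * ((τ * (1 - τ) * (((i : ℕ) : ℝ) - ((sg.symm i : Fin n) : ℕ)) : ℝ) : ℂ)

lemma gam_re (sg : Equiv.Perm (Fin n)) (τ : ℝ) (i : Fin n) :
    (gam sg τ i).re = (1 - τ) * ((sg.symm i : Fin n) : ℕ) + τ * (i : ℕ) := by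
  simp [gam, Complex.add_re, Complex.mul_re]

lemma gam_im (sg : Equiv.Perm (Fin n)) (τ : ℝ) (i : Fin n) :
    (gam sg τ i).im = τ * (1 - τ) * (((i : ℕ) : ℝ) - ((sg.symm i : Fin n) : ℕ)) := by
  simp [gam, Complex.add_im, Complex.mul_im]

lemma lin_re (sg : Equiv.Perm (Fin n)) (x : Fin n → ℂ) (t : ℝ) (i : Fin n) :
    (linmap sg x t i).re = (1 - t) * (x i).re + t * ((sg.symm i : Fin n) : ℕ) := by
  simp [linmap, qsg, Complex.add_re, Complex.mul_re]

lemma lin_im (sg : Equiv.Perm (Fin n)) (x : Fin n → ℂ) (t : ℝ) (i : Fin n) :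
    (linmap sg x t i).im = (1 - t) * (x i).im := by
  simp [linmap, qsg, Complex.add_im, Complex.mul_im]

lemma lin_inj {sg : Equiv.Perm (Fin n)} {b : Finset (Fin n)} {x : Fin n → ℂ}
    (hx : PieceCond sg b x) {t : ℝ} (ht0 : 0 ≤ t) (ht1 : t ≤ 1) :
    Function.Injective (linmap sg x t) := by
  have aux : ∀ i j : Fin n, sg.symm i < sg.symm j → linmap sg x t i = linmap sg x t j → False := by
    intro i j hlt hij
    have hxi : x i = x (sg (sg.symm i)) := by rw [Equiv.apply_symm_apply]
    have hxj : x j = x (sg (sg.symm j)) := by rw [Equiv.apply_symm_apply]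
    have hre := congrArg Complex.re hij
    have him := congrArg Complex.im hij
    rw [lin_re, lin_re] at hre
    rw [lin_im, lin_im] at him
    set p := sg.symm i with hp
    set q := sg.symm j with hq
    by_cases hbk : blk b p = blk b q
    · rcases lt_or_eq_of_le ht1 with ht | ht
      · have himlt : (x i).im < (x j).im := by
          rw [hxi, hxj]
          exact hx.1 p q hlt hbk
        nlinarith
      · subst ht
        have : ((p : ℕ) : ℝ) = ((q : ℕ) : ℝ) := by linarith [hre]
        have : (p : ℕ) = (q : ℕ) := by exact_mod_cast this
        exact absurd (Fin.ext this) (ne_of_lt hlt)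
    · have hblt : blk b p < blk b q := lt_of_le_of_ne (blk_mono b hlt.le) hbk
      have hcr := cross hx p p p q rfl hblt
      have h0 : (0:ℝ) ≤ 3 * |(x (sg p)).re - (x (sg p)).re| := by positivity
      have hrelt : (x i).re < (x j).re := by
        rw [hxi, hxj]; linarith
      have hnat : ((p : ℕ) : ℝ) < ((q : ℕ) : ℝ) := by
        exact_mod_cast hlt
      rcases lt_or_eq_of_le ht1 with ht | ht
      · nlinarith
      · subst ht; nlinarith
  intro i j hij
  rcases lt_trichotomy (sg.symm i) (sg.symm j) with h | h | h
  · exact absurd hij (fun hh => aux i j h hh)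
  · exact sg.symm.injective h
  · exact absurd hij.symm (fun hh => aux j i h hh)

lemma gam_inj (sg : Equiv.Perm (Fin n)) {τ : ℝ} (ht0 : 0 ≤ τ) (ht1 : τ ≤ 1) :
    Function.Injective (gam sg τ) := by
  intro i j hij
  have hre := congrArg Complex.re hij
  have him := congrArg Complex.im hij
  rw [gam_re, gam_re] at hre
  rw [gam_im, gam_im] at him
  set A := ((sg.symm i : Fin n) : ℕ) with hA
  set A' := ((sg.symm j : Fin n) : ℕ) with hA'
  rcases eq_or_lt_of_le ht0 with h0 | h0
  · -- τ = 0
    have : (A : ℝ) = A' := by rw [← h0] at hre; simpa using hre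
    have : A = A' := by exact_mod_cast this
    exact sg.symm.injective (Fin.ext this)
  rcases eq_or_lt_of_le ht1 with h1 | h1
  · -- τ = 1
    have : ((i : ℕ) : ℝ) = ((j : ℕ) : ℝ) := by rw [h1] at hre; simpa using hre
    have : (i : ℕ) = (j : ℕ) := by exact_mod_cast this
    exact Fin.ext this
  · have hτ : τ * (1 - τ) ≠ 0 :=
      mul_ne_zero (ne_of_gt h0) (ne_of_gt (by linarith : (0:ℝ) < 1 - τ))
    have hd : ((i : ℕ) : ℝ) - A = ((j : ℕ) : ℝ) - A' := by
      exact mul_left_cancel₀ hτ him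
    have : ((i : ℕ) : ℝ) = ((j : ℕ) : ℝ) := by nlinarith
    have : (i : ℕ) = (j : ℕ) := by exact_mod_cast this
    exact Fin.ext this

lemma lin_zero (sg : Equiv.Perm (Fin n)) (x : Fin n → ℂ) : linmap sg x 0 = x := by
  funext i; simp [linmap]

lemma lin_one_eq_gam_zero (sg : Equiv.Perm (Fin n)) (x : Fin n → ℂ) :
    linmap sg x 1 = gam sg 0 := by
  funext i
  apply Complex.ext
  · rw [lin_re, gam_re]; ring
  · rw [lin_im, gam_im]; ring

lemma gam_one (sg : Equiv.Perm (Fin n)) : gam sg 1 = fun i : Fin n => ((i : ℕ) : ℂ) := by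
  funext i
  apply Complex.ext
  · rw [gam_re]; simp
  · rw [gam_im]; simp

end Geometry2
end TCProof
namespace TCProof
open Set Complex Equiv

section Geometry3

variable {n : ℕ} (hn : 2 ≤ n)

def PieceSet (sg : Equiv.Perm (Fin n)) (b : Finset (Fin n)) : Set (Mhat hn) :=
  {x | PieceCond sg b x.1}

lemma pieceSet_open (sg : Equiv.Perm (Fin n)) (b : Finset (Fin n)) :
    IsOpen (PieceSet hn sg b) := by
  have himc : ∀ i : Fin n, Continuous fun x : Mhat hn => (x.1 i).im :=
    fun i => Complex.continuous_im.comp ((continuous_apply i).comp continuous_subtype_val)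
  have hrec : ∀ i : Fin n, Continuous fun x : Mhat hn => (x.1 i).re :=
    fun i => Complex.continuous_re.comp ((continuous_apply i).comp continuous_subtype_val)
  have hdecomp : PieceSet hn sg b =
      (⋂ (p : Fin n) (q : Fin n),
        {x : Mhat hn | p < q → blk b p = blk b q → (x.1 (sg p)).im < (x.1 (sg q)).im}) ∩
      (⋂ (p : Fin n) (q : Fin n) (p' : Fin n) (q' : Fin n),
        {x : Mhat hn | blk b p = blk b q → blk b q' = blk b p' + 1 →
          3 * |(x.1 (sg p)).re - (x.1 (sg q)).re| < (x.1 (sg q')).re - (x.1 (sg p')).re}) := by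
    ext x
    simp only [PieceSet, PieceCond, Set.mem_inter_iff, Set.mem_iInter, Set.mem_setOf_eq]
  rw [hdecomp]
  apply IsOpen.inter
  · apply isOpen_iInter_of_finite; intro p
    apply isOpen_iInter_of_finite; intro q
    by_cases h1 : p < q
    · by_cases h2 : blk b p = blk b q
      · have : {x : Mhat hn | p < q → blk b p = blk b q → (x.1 (sg p)).im < (x.1 (sg q)).im}
            = {x : Mhat hn | (x.1 (sg p)).im < (x.1 (sg q)).im} := by
          ext x; simp [h1, h2]
        rw [this]
        exact isOpen_lt (himc (sg p)) (himc (sg q))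
      · have : {x : Mhat hn | p < q → blk b p = blk b q → (x.1 (sg p)).im < (x.1 (sg q)).im}
            = Set.univ := by
          ext x; simp [h2]
        rw [this]; exact isOpen_univ
    · have : {x : Mhat hn | p < q → blk b p = blk b q → (x.1 (sg p)).im < (x.1 (sg q)).im}
          = Set.univ := by
        ext x; simp [h1]
      rw [this]; exact isOpen_univ
  · apply isOpen_iInter_of_finite; intro p
    apply isOpen_iInter_of_finite; intro q
    apply isOpen_iInter_of_finite; intro p'
    apply isOpen_iInter_of_finite; intro q'
    by_cases h1 : blk b p = blk b q
    · by_cases h2 : blk b q' = blk b p' + 1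
      · have : {x : Mhat hn | blk b p = blk b q → blk b q' = blk b p' + 1 →
            3 * |(x.1 (sg p)).re - (x.1 (sg q)).re| < (x.1 (sg q')).re - (x.1 (sg p')).re}
            = {x : Mhat hn |
            3 * |(x.1 (sg p)).re - (x.1 (sg q)).re| < (x.1 (sg q')).re - (x.1 (sg p')).re} := by
          ext x; simp [h1, h2]
        rw [this]
        apply isOpen_lt
        · have : Continuous fun x : Mhat hn => (x.1 (sg p)).re - (x.1 (sg q)).re :=
            (hrec (sg p)).sub (hrec (sg q))
          exact (continuous_const.mul this.abs)
        · exact (hrec (sg q')).sub (hrec (sg p'))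
      · have : {x : Mhat hn | blk b p = blk b q → blk b q' = blk b p' + 1 →
            3 * |(x.1 (sg p)).re - (x.1 (sg q)).re| < (x.1 (sg q')).re - (x.1 (sg p')).re}
            = Set.univ := by
          ext x; simp [h2]
        rw [this]; exact isOpen_univ
    · have : {x : Mhat hn | blk b p = blk b q → blk b q' = blk b p' + 1 →
          3 * |(x.1 (sg p)).re - (x.1 (sg q)).re| < (x.1 (sg q')).re - (x.1 (sg p')).re}
          = Set.univ := by
        ext x; simp [h1]
      rw [this]; exact isOpen_univ

noncomputable def rnorm (y : Fin n → ℂ) : Fin n → ℂ :=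
  fun i => (y i - y (ii0 hn)) / (y (ii1 hn) - y (ii0 hn))

lemma ii_ne : ii0 hn ≠ ii1 hn := by
  intro h
  have : (0 : ℕ) = 1 := congrArg Fin.val h
  omega

lemma rnorm_den_ne {y : Fin n → ℂ} (hy : Function.Injective y) :
    y (ii1 hn) - y (ii0 hn) ≠ 0 :=
  sub_ne_zero.mpr (fun h => (ii_ne hn) (hy h.symm))

lemma rnorm_inj {y : Fin n → ℂ} (hy : Function.Injective y) :
    Function.Injective (rnorm hn y) := by
  intro i j h
  apply hy
  have hd := rnorm_den_ne hn hy
  simp only [rnorm] at h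
  rw [div_eq_div_iff hd hd] at h
  have h2 := mul_right_cancel₀ hd h
  exact sub_left_inj.mp h2

lemma rnorm_mem {y : Fin n → ℂ} (hy : Function.Injective y) :
    Function.Injective (rnorm hn y) ∧ rnorm hn y (ii0 hn) = 0 ∧ rnorm hn y (ii1 hn) = 1 := by
  refine ⟨rnorm_inj hn hy, ?_, ?_⟩
  · rw [rnorm]; simp
  · rw [rnorm]
    exact div_self (rnorm_den_ne hn hy)

lemma piece_contr (sg : Equiv.Perm (Fin n)) (b : Finset (Fin n)) :
    Contr (Mhat hn) (basept hn) (PieceSet hn sg b) := by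
  classical
  set T : Set (Mhat hn) := PieceSet hn sg b with hTdef
  set Hraw : ↥T × ↥I → Fin n → ℂ := fun q =>
    if ((q.2 : ℝ)) ≤ 1/2 then linmap sg q.1.1.1 (2 * (q.2 : ℝ)) else gam sg (2 * (q.2 : ℝ) - 1)
    with hHraw
  have hinj : ∀ q : ↥T × ↥I, Function.Injective (Hraw q) := by
    intro q
    rw [hHraw]
    dsimp only
    split_ifs with h
    · have h1 := q.2.2.1
      exact lin_inj q.1.2 (by linarith) (by linarith)
    · have h1 := q.2.2.1
      have h2 := q.2.2.2
      push_neg at h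
      exact gam_inj sg (by linarith) (by linarith)
  have hden : ∀ q : ↥T × ↥I, Hraw q (ii1 hn) - Hraw q (ii0 hn) ≠ 0 :=
    fun q => rnorm_den_ne hn (hinj q)
  have hcoord : ∀ i : Fin n, Continuous fun q : ↥T × ↥I => Hraw q i := by
    intro i
    have hrw : (fun q : ↥T × ↥I => Hraw q i)
        = fun q : ↥T × ↥I => if ((q.2 : ℝ)) ≤ 1/2 then linmap sg q.1.1.1 (2 * (q.2 : ℝ)) i
          else gam sg (2 * (q.2 : ℝ) - 1) i := by
      funext q
      rw [hHraw]
      dsimp only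
      split_ifs <;> rfl
    rw [hrw]
    apply Continuous.if_le
    · -- continuity of linmap coordinate
      apply Continuous.add
      · apply Continuous.mul
        · apply Complex.continuous_ofReal.comp
          fun_prop
        · exact (continuous_apply i).comp
            (by fun_prop)
      · fun_prop
    · -- continuity of gam coordinate
      apply Continuous.add
      · apply Complex.continuous_ofReal.comp
        fun_prop
      · apply Continuous.mul continuous_const
        apply Complex.continuous_ofReal.comp
        fun_prop
    · fun_prop
    · fun_prop
    · intro q hq
      have e1 : 2 * (q.2 : ℝ) = 1 := by rw [hq]; ring
      have e2 : 2 * (q.2 : ℝ) - 1 = 0 := by rw [hq]; ring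
      rw [e2, e1]
      exact congrFun (lin_one_eq_gam_zero sg q.1.1.1) i
  set H : ↥T × ↥I → Mhat hn := fun q =>
    ⟨rnorm hn (Hraw q), (rnorm_mem hn (hinj q)).1,
      (rnorm_mem hn (hinj q)).2.1, (rnorm_mem hn (hinj q)).2.2⟩ with hH
  have hHcont : Continuous H := by
    apply Continuous.subtype_mk
    apply continuous_pi
    intro i
    apply Continuous.div
    · exact (hcoord i).sub (hcoord (ii0 hn))
    · exact (hcoord (ii1 hn)).sub (hcoord (ii0 hn))
    · exact hden
  refine ⟨ContinuousMap.mk H hHcont, ?_, ?_⟩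
  · intro u
    show H (u, 0) = u
    apply Subtype.ext
    show rnorm hn (Hraw (u, 0)) = u.1.1
    have h0 : Hraw (u, 0) = u.1.1 := by
      rw [hHraw]
      dsimp only
      rw [if_pos (by norm_num : (((0 : ↥I)) : ℝ) ≤ 1/2)]
      have : 2 * (((0 : ↥I)) : ℝ) = 0 := by norm_num
      rw [this, lin_zero]
    rw [h0]
    funext i
    rw [rnorm, u.1.2.2.1, u.1.2.2.2]
    simp
  · intro u
    show H (u, 1) = basept hn
    apply Subtype.ext
    show rnorm hn (Hraw (u, 1)) = (basept hn).1
    have h1 : Hraw (u, 1) = fun i : Fin n => ((i : ℕ) : ℂ) := by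
      rw [hHraw]
      dsimp only
      rw [if_neg (by norm_num : ¬(((1 : ↥I)) : ℝ) ≤ 1/2)]
      have : 2 * (((1 : ↥I)) : ℝ) - 1 = 1 := by norm_num
      rw [this, gam_one]
    rw [h1]
    funext i
    show ((((i : ℕ) : ℂ)) - (((ii0 hn : Fin n) : ℕ) : ℂ)) / ((((ii1 hn : Fin n) : ℕ) : ℂ) - (((ii0 hn : Fin n) : ℕ) : ℂ)) = ((i : ℕ) : ℂ)
    have e0 : (((ii0 hn : Fin n) : ℕ) : ℂ) = 0 := by norm_num [ii0]
    have e1 : (((ii1 hn : Fin n) : ℕ) : ℂ) = 1 := by norm_num [ii1]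
    rw [e0, e1]
    simp

end Geometry3
end TCProof
namespace TCProof
open Set Complex Equiv

section Geometry4

variable {n : ℕ} (hn : 2 ≤ n)

lemma cover_exists (x : Mhat hn) :
    ∃ (sg : Equiv.Perm (Fin n)) (b : Finset (Fin n)),
      (⟨0, by omega⟩ : Fin n) ∈ b ∧ 2 ≤ b.card ∧ b.card ≤ n ∧ PieceCond sg b x.1 := by
  classical
  set f : Fin n → ℝ ×ₗ ℝ := fun i => toLex ((x.1 i).re, (x.1 i).im) with hf
  set sg : Equiv.Perm (Fin n) := Tuple.sort f with hsg
  have hmono : Monotone (f ∘ sg) := Tuple.monotone_sort f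
  have hfinj : Function.Injective f := by
    intro i j hij
    apply x.2.1
    have hij' := hij
    rw [hf] at hij'
    have h1 : ((x.1 i).re, (x.1 i).im) = ((x.1 j).re, (x.1 j).im) := congrArg ofLex hij'
    apply Complex.ext
    · exact congrArg Prod.fst h1
    · exact congrArg Prod.snd h1
  have hstrict : StrictMono (f ∘ sg) :=
    hmono.strictMono_of_injective (hfinj.comp sg.injective)
  set Rp : Fin n → ℝ := fun p => (x.1 (sg p)).re with hRp
  have hRmono : Monotone Rp := by
    intro p q hpq
    have := hmono hpq
    rw [Function.comp_apply, Function.comp_apply, hf] at this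
    rw [Prod.Lex.le_iff] at this
    rcases this with h | h
    · exact le_of_lt h
    · exact le_of_eq h.1
  set z0 : Fin n := ⟨0, by omega⟩ with hz0
  set b : Finset (Fin n) :=
    insert z0 (Finset.univ.filter
      (fun q : Fin n => 0 < q.1 ∧ (x.1 (sg q)).re ≠ (x.1 (sg (pr q))).re)) with hb
  have h0b : z0 ∈ b := Finset.mem_insert_self _ _
  have hmemb : ∀ q : Fin n, q.1 ≠ 0 → (q ∈ b ↔ (x.1 (sg q)).re ≠ (x.1 (sg (pr q))).re) := by
    intro q hq
    rw [hb]
    simp only [Finset.mem_insert, Finset.mem_filter, Finset.mem_univ, true_and]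
    constructor
    · rintro (rfl | h)
      · exact absurd rfl hq
      · exact h.2
    · intro h
      exact Or.inr ⟨Nat.pos_of_ne_zero hq, h⟩
  -- same block implies equal real part
  have hsame : ∀ p q : Fin n, p ≤ q → blk b p = blk b q → Rp p = Rp q := by
    intro p q hpq hblk
    obtain ⟨d, hd⟩ : ∃ d, q.1 - p.1 = d := ⟨_, rfl⟩
    induction d generalizing q with
    | zero =>
      have : p = q := by
        apply Fin.ext
        have : p.1 ≤ q.1 := hpq
        omega
      rw [this]
    | succ d ih =>
      have hppos : p.1 < q.1 := by
        have h1 : p.1 ≤ q.1 := hpq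
        omega
      have hq0 : q.1 ≠ 0 := by omega
      have hple : p ≤ pr q := by show p.1 ≤ q.1 - 1; omega
      have hprq : pr q ≤ q := by show q.1 - 1 ≤ q.1; omega
      have hb1 : blk b p ≤ blk b (pr q) := blk_mono b hple
      have hb2 : blk b (pr q) ≤ blk b q := blk_mono b hprq
      have hq_notb : q ∉ b := by
        intro hmem
        have := blk_pr b hq0
        rw [if_pos hmem] at this
        omega
      have hre : (x.1 (sg q)).re = (x.1 (sg (pr q))).re := by
        by_contra hne
        exact hq_notb ((hmemb q hq0).mpr hne)
      have hih : Rp p = Rp (pr q) :=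
        ih (pr q) hple (by omega) (by show (pr q).1 - p.1 = d; show q.1 - 1 - p.1 = d; omega)
      rw [hih]
      exact hre.symm
  -- strictly bigger block implies strictly bigger real part
  have hcrossre : ∀ p q : Fin n, blk b p < blk b q → Rp p < Rp q := by
    intro p q hblk
    have hpq : p ≤ q := by
      by_contra hcon
      push_neg at hcon
      exact absurd (blk_mono b hcon.le) (by omega)
    have hsub : b.filter (fun r => r ≤ p) ⊆ b.filter (fun r => r ≤ q) := by
      intro r hr
      rw [Finset.mem_filter] at hr ⊢
      exact ⟨hr.1, le_trans hr.2 hpq⟩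
    have hss : b.filter (fun r => r ≤ p) ⊂ b.filter (fun r => r ≤ q) := by
      refine Finset.ssubset_iff_of_subset hsub |>.mpr ?_
      by_contra hcon
      push_neg at hcon
      have hsub2 : b.filter (fun r => r ≤ q) ⊆ b.filter (fun r => r ≤ p) := fun r hr => hcon r hr
      have := Finset.card_le_card hsub2
      rw [blk, blk] at hblk
      omega
    obtain ⟨u, huq, hup⟩ := Finset.exists_of_ssubset hss
    rw [Finset.mem_filter] at huq
    have hub : u ∈ b := huq.1
    have hulq : u ≤ q := huq.2
    have hpu : p < u := by
      by_contra hcon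
      push_neg at hcon
      exact hup (Finset.mem_filter.mpr ⟨hub, hcon⟩)
    have hu0 : u.1 ≠ 0 := by
      have : p.1 < u.1 := hpu
      omega
    have hune : (x.1 (sg u)).re ≠ (x.1 (sg (pr u))).re := (hmemb u hu0).mp hub
    have hprlt : Rp (pr u) < Rp u := by
      have hle : Rp (pr u) ≤ Rp u := hRmono (by show u.1 - 1 ≤ u.1; omega)
      rcases lt_or_eq_of_le hle with h | h
      · exact h
      · exact absurd h.symm hune
    have h1 : Rp p ≤ Rp (pr u) := hRmono (by show p.1 ≤ u.1 - 1; have : p.1 < u.1 := hpu; omega)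
    have h2 : Rp u ≤ Rp q := hRmono hulq
    linarith
  -- the piece conditions hold
  have hcond : PieceCond sg b x.1 := by
    constructor
    · intro p q hpq hblk
      have hre : Rp p = Rp q := hsame p q hpq.le hblk
      have := hstrict hpq
      rw [Function.comp_apply, Function.comp_apply, hf, Prod.Lex.lt_iff] at this
      rcases this with h | h
      · exact absurd hre (ne_of_lt h)
      · exact h.2
    · intro p q p' q' hblk hblk'
      have hre : Rp p = Rp q := by
        rcases le_total p q with h | h
        · exact hsame p q h hblk
        · exact (hsame q p h hblk.symm).symm
      have hcr : Rp p' < Rp q' := hcrossre p' q' (by omega)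
      have hre' : (x.1 (sg p)).re = (x.1 (sg q)).re := hre
      have hcr' : (x.1 (sg p')).re < (x.1 (sg q')).re := hcr
      rw [hre']
      simp only [sub_self, abs_zero, mul_zero]
      linarith
  -- cardinality bounds
  have hcard_le : b.card ≤ n := by
    have := Finset.card_le_card (Finset.subset_univ b)
    rwa [Finset.card_univ, Fintype.card_fin] at this
  have hcard_ge : 2 ≤ b.card := by
    by_contra hcon
    push_neg at hcon
    have hcard1 : b.card = 1 := by
      have h1 : 1 ≤ b.card := Finset.card_pos.mpr ⟨z0, h0b⟩
      omega
    have hconst : ∀ p : Fin n, blk b p = 1 := by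
      intro p
      have h1 := blk_pos (by rw [hz0]) h0b p
      have h2 := blk_le_card b p
      omega
    have hR01 : Rp (sg.symm (ii0 hn)) = 0 := by
      show (x.1 (sg (sg.symm (ii0 hn)))).re = 0
      rw [Equiv.apply_symm_apply, x.2.2.1]
      simp
    have hR11 : Rp (sg.symm (ii1 hn)) = 1 := by
      show (x.1 (sg (sg.symm (ii1 hn)))).re = 1
      rw [Equiv.apply_symm_apply, x.2.2.2]
      simp
    have heq : Rp (sg.symm (ii0 hn)) = Rp (sg.symm (ii1 hn)) := by
      rcases le_total (sg.symm (ii0 hn)) (sg.symm (ii1 hn)) with h | h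
      · exact hsame _ _ h (by rw [hconst, hconst])
      · exact (hsame _ _ h (by rw [hconst, hconst])).symm
    rw [hR01, hR11] at heq
    norm_num at heq
  exact ⟨sg, b, h0b, hcard_ge, hcard_le, hcond⟩

end Geometry4
end TCProof
namespace TCProof
open Set Complex Equiv

section Geometry5

variable {n : ℕ} (hn : 2 ≤ n)

lemma refines_symm {m : ℕ} {F F' : Fin m → ℕ}
    (hcard : (Finset.univ.image F).card = (Finset.univ.image F').card)
    (href : ∀ i j, F i = F j → F' i = F' j) :
    ∀ i j, F' i = F' j → F i = F j := by
  classical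
  set φ : ℕ → ℕ := fun v => if h : ∃ i, F i = v then F' h.choose else 0 with hφdef
  have hφ : ∀ i, F' i = φ (F i) := by
    intro i
    have h : ∃ j, F j = F i := ⟨i, rfl⟩
    rw [hφdef]
    dsimp only
    rw [dif_pos h]
    exact (href _ _ h.choose_spec).symm
  have himg : Finset.univ.image F' = (Finset.univ.image F).image φ := by
    ext v
    simp only [Finset.mem_image, Finset.mem_univ, true_and, exists_exists_eq_and]
    constructor
    · rintro ⟨i, rfl⟩
      exact ⟨i, (hφ i).symm⟩
    · rintro ⟨i, rfl⟩
      exact ⟨i, hφ i⟩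
  have hinj : Set.InjOn φ (Finset.univ.image F) := by
    apply Finset.injOn_of_card_image_eq
    rw [← himg, hcard]
  intro i j h
  have h1 : φ (F i) = φ (F j) := by rw [← hφ i, ← hφ j, h]
  exact hinj (Finset.mem_coe.mpr (Finset.mem_image_of_mem F (Finset.mem_univ i)))
    (Finset.mem_coe.mpr (Finset.mem_image_of_mem F (Finset.mem_univ j))) h1

lemma image_blk_card {b : Finset (Fin n)} (h0 : (⟨0, by omega⟩ : Fin n) ∈ b)
    (sg : Equiv.Perm (Fin n)) :
    (Finset.univ.image (fun i => blk b (sg.symm i))).card = b.card := by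
  classical
  have h1 : Finset.univ.image (fun i => blk b (sg.symm i)) = Finset.univ.image (blk b) := by
    ext v
    simp only [Finset.mem_image, Finset.mem_univ, true_and]
    constructor
    · rintro ⟨i, rfl⟩; exact ⟨sg.symm i, rfl⟩
    · rintro ⟨p, rfl⟩; exact ⟨sg p, by rw [Equiv.symm_apply_apply]⟩
  have h2 : Finset.univ.image (blk b) = Finset.Icc 1 b.card := by
    ext v
    simp only [Finset.mem_image, Finset.mem_univ, true_and, Finset.mem_Icc]
    constructor
    · rintro ⟨p, rfl⟩
      exact ⟨blk_pos rfl h0 p, blk_le_card b p⟩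
    · rintro ⟨hv1, hv2⟩
      have hle : (⟨0, by omega⟩ : Fin n) ≤ (⟨n-1, by omega⟩ : Fin n) := by
        show (0:ℕ) ≤ n - 1; omega
      obtain ⟨u, _, _, hu⟩ := blk_ivt b ⟨0, by omega⟩ ⟨n-1, by omega⟩ hle v
        (by rw [blk_zero_mem rfl h0]; omega) (by rw [blk_last (by omega)]; omega)
      exact ⟨u, hu⟩
  rw [h1, h2, Nat.card_Icc]
  omega

/-- The main disjointness statement: a configuration cannot lie in two distinct pieces
with the same number of blocks. -/
lemma piece_unique {sg sg' : Equiv.Perm (Fin n)} {b b' : Finset (Fin n)}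
    (h0 : (⟨0, by omega⟩ : Fin n) ∈ b) (h0' : (⟨0, by omega⟩ : Fin n) ∈ b')
    (hcard : b.card = b'.card) {x : Fin n → ℂ}
    (hx : PieceCond sg b x) (hx' : PieceCond sg' b' x) : sg = sg' ∧ b = b' := by
  classical
  set F : Fin n → ℕ := fun i => blk b (sg.symm i) with hF
  set F' : Fin n → ℕ := fun i => blk b' (sg'.symm i) with hF'
  have himgcard : (Finset.univ.image F).card = (Finset.univ.image F').card := by
    rw [image_blk_card hn h0 sg, image_blk_card hn h0' sg', hcard]
  -- Step A: the two partitions coincide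
  have hiff : ∀ i j, F i = F j ↔ F' i = F' j := by
    have hWcase : (∀ i j, F i = F j → F' i = F' j) ∨ (∀ i j, F' i = F' j → F i = F j) := by
      by_contra hcon
      push_neg at hcon
      obtain ⟨⟨i, j, hPij, hP'ij⟩, ⟨k, l, hP'kl, hPkl⟩⟩ := hcon
      -- numeric contradiction
      have hxi : x (sg (sg.symm i)) = x i := by rw [Equiv.apply_symm_apply]
      set D1 := |(x i).re - (x j).re| with hD1
      set D2 := |(x k).re - (x l).re| with hD2
      have h31 : 3 * D1 < D2 := by
        rcases lt_or_gt_of_ne (show blk b (sg.symm k) ≠ blk b (sg.symm l) from hPkl) with h | h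
        · have := cross hx (sg.symm i) (sg.symm j) (sg.symm k) (sg.symm l) hPij h
          simp only [Equiv.apply_symm_apply] at this
          have hle : (x l).re - (x k).re ≤ D2 := by
            rw [hD2, abs_sub_comm]
            exact le_abs_self _
          rw [hD1]
          linarith
        · have := cross hx (sg.symm i) (sg.symm j) (sg.symm l) (sg.symm k) hPij h
          simp only [Equiv.apply_symm_apply] at this
          have hle : (x k).re - (x l).re ≤ D2 := le_abs_self _
          rw [hD1]
          linarith
      have h32 : 3 * D2 < D1 := by
        rcases lt_or_gt_of_ne (show blk b' (sg'.symm i) ≠ blk b' (sg'.symm j) from hP'ij) with h | h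
        · have := cross hx' (sg'.symm k) (sg'.symm l) (sg'.symm i) (sg'.symm j) hP'kl h
          simp only [Equiv.apply_symm_apply] at this
          have hle : (x j).re - (x i).re ≤ D1 := by
            rw [hD1, abs_sub_comm]
            exact le_abs_self _
          rw [hD2]
          linarith
        · have := cross hx' (sg'.symm k) (sg'.symm l) (sg'.symm j) (sg'.symm i) hP'kl h
          simp only [Equiv.apply_symm_apply] at this
          have hle : (x i).re - (x j).re ≤ D1 := le_abs_self _
          rw [hD2]
          linarith
      have hD1nn : 0 ≤ D1 := abs_nonneg _
      linarith
    rcases hWcase with href | href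
    · intro i j
      exact ⟨href i j, refines_symm himgcard href i j⟩
    · intro i j
      exact ⟨refines_symm himgcard.symm href i j, href i j⟩
  -- Step B1: the order relation
  set Rel : Fin n → Fin n → Prop := fun i j =>
    (F i ≠ F j ∧ (x i).re < (x j).re) ∨ (F i = F j ∧ (x i).im < (x j).im) with hRel
  have hasymm : ∀ i j, Rel i j → Rel j i → False := by
    intro i j h1 h2
    rcases h1 with ⟨hn1, hr1⟩ | ⟨he1, hi1⟩ <;> rcases h2 with ⟨hn2, hr2⟩ | ⟨he2, hi2⟩
    · linarith
    · exact hn1 he2.symm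
    · exact hn2 he1.symm
    · linarith
  have hsgmono : ∀ p q : Fin n, p < q → Rel (sg p) (sg q) := by
    intro p q hpq
    have hFp : F (sg p) = blk b p := by rw [hF]; simp
    have hFq : F (sg q) = blk b q := by rw [hF]; simp
    by_cases hbk : blk b p = blk b q
    · exact Or.inr ⟨by rw [hFp, hFq, hbk], hx.1 p q hpq hbk⟩
    · have hlt : blk b p < blk b q := lt_of_le_of_ne (blk_mono b hpq.le) hbk
      have := cross hx p p p q rfl hlt
      have h0' : (0:ℝ) ≤ 3 * |(x (sg p)).re - (x (sg p)).re| := by positivity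
      exact Or.inl ⟨by rw [hFp, hFq]; exact hbk, by linarith⟩
  have hsg'mono : ∀ p q : Fin n, p < q → Rel (sg' p) (sg' q) := by
    intro p q hpq
    have hFp : F' (sg' p) = blk b' p := by rw [hF']; simp
    have hFq : F' (sg' q) = blk b' q := by rw [hF']; simp
    by_cases hbk : blk b' p = blk b' q
    · refine Or.inr ⟨?_, hx'.1 p q hpq hbk⟩
      exact (hiff _ _).mpr (by rw [hFp, hFq, hbk])
    · have hlt : blk b' p < blk b' q := lt_of_le_of_ne (blk_mono b' hpq.le) hbk
      have := cross hx' p p p q rfl hlt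
      have h0' : (0:ℝ) ≤ 3 * |(x (sg' p)).re - (x (sg' p)).re| := by positivity
      refine Or.inl ⟨?_, by linarith⟩
      intro hc
      have hc2 := (hiff _ _).mp hc
      rw [hFp, hFq] at hc2
      exact hbk hc2
  -- Step B2: σ = σ'
  have main : ∀ p : Fin n, (∀ q : Fin n, q < p → sg q = sg' q) → sg p = sg' p := by
    intro p IH
    by_contra hne
    have h1 : p < sg'.symm (sg p) := by
      rcases lt_trichotomy (sg'.symm (sg p)) p with h | h | h
      · exfalso
        have := IH _ h
        have h2 : sg (sg'.symm (sg p)) = sg p := by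
          rw [this, Equiv.apply_symm_apply]
        have := sg.injective h2
        rw [this] at h
        exact lt_irrefl _ h
      · exact absurd ((Equiv.symm_apply_eq sg').mp h) hne
      · exact h
    have h2 : p < sg.symm (sg' p) := by
      rcases lt_trichotomy (sg.symm (sg' p)) p with h | h | h
      · exfalso
        have := IH _ h
        have h2 : sg' (sg.symm (sg' p)) = sg' p := by
          rw [← this, Equiv.apply_symm_apply]
        have := sg'.injective h2
        rw [this] at h
        exact lt_irrefl _ h
      · exact absurd ((Equiv.symm_apply_eq sg).mp h).symm hne
      · exact h
    have r1 : Rel (sg' p) (sg p) := by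
      have := hsg'mono p (sg'.symm (sg p)) h1
      rwa [Equiv.apply_symm_apply] at this
    have r2 : Rel (sg p) (sg' p) := by
      have := hsgmono p (sg.symm (sg' p)) h2
      rwa [Equiv.apply_symm_apply] at this
    exact hasymm _ _ r1 r2
  have hsgeq : sg = sg' := by
    have key : ∀ m : ℕ, ∀ p : Fin n, p.1 ≤ m → sg p = sg' p := by
      intro m
      induction m with
      | zero =>
        intro p hp
        apply main p
        intro q hq
        have : q.1 < p.1 := hq
        omega
      | succ m ih =>
        intro p hp
        apply main p
        intro q hq
        apply ih
        have : q.1 < p.1 := hq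
        omega
    apply Equiv.ext
    intro p
    exact key p.1 p (le_refl _)
  -- Step B3: b = b'
  have hblkeq : ∀ p : Fin n, blk b p = blk b' p := by
    have hmemiff : ∀ p : Fin n, p.1 ≠ 0 → (p ∈ b ↔ p ∈ b') := by
      intro p hp
      have e1 := blk_pr b hp
      have e2 := blk_pr b' hp
      have hFiff := hiff (sg p) (sg (pr p))
      have hFp : F (sg p) = blk b p := by rw [hF]; simp
      have hFpr : F (sg (pr p)) = blk b (pr p) := by rw [hF]; simp
      have hF'p : F' (sg p) = blk b' p := by rw [hF', ← hsgeq]; simp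
      have hF'pr : F' (sg (pr p)) = blk b' (pr p) := by rw [hF', ← hsgeq]; simp
      rw [hFp, hFpr, hF'p, hF'pr] at hFiff
      constructor
      · intro hmem
        by_contra hmem'
        rw [if_pos hmem] at e1
        rw [if_neg hmem'] at e2
        have hne1 : blk b p ≠ blk b (pr p) := by omega
        have hne2 : blk b' p = blk b' (pr p) := by omega
        exact hne1 (hFiff.mpr hne2)
      · intro hmem
        by_contra hmem'
        rw [if_pos hmem] at e2
        rw [if_neg hmem'] at e1
        have hne1 : blk b p = blk b (pr p) := by omega
        have hne2 : blk b' p ≠ blk b' (pr p) := by omega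
        exact hne2 (hFiff.mp hne1)
    intro p
    obtain ⟨m, hm⟩ : ∃ m, p.1 = m := ⟨_, rfl⟩
    induction m generalizing p with
    | zero =>
      have hp0 : p = ⟨0, by omega⟩ := Fin.ext hm
      rw [hp0, blk_zero_mem rfl h0, blk_zero_mem rfl h0']
    | succ m ih =>
      have hp : p.1 ≠ 0 := by omega
      have e1 := blk_pr b hp
      have e2 := blk_pr b' hp
      have hihm : blk b (pr p) = blk b' (pr p) := ih (pr p) (by show p.1 - 1 = m; omega)
      by_cases hmem : p ∈ b
      · have hmem' : p ∈ b' := (hmemiff p hp).mp hmem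
        rw [if_pos hmem] at e1
        rw [if_pos hmem'] at e2
        omega
      · have hmem' : p ∉ b' := fun hc => hmem ((hmemiff p hp).mpr hc)
        rw [if_neg hmem] at e1
        rw [if_neg hmem'] at e2
        omega
  have hbeq : b = b' := by
    ext q
    by_cases hq : q.1 = 0
    · have : q = ⟨0, by omega⟩ := Fin.ext hq
      rw [this]
      simp [h0, h0']
    · have e1 := blk_pr b hq
      have e2 := blk_pr b' hq
      have h1 := hblkeq q
      have h2 := hblkeq (pr q)
      constructor
      · intro hmem
        rw [if_pos hmem] at e1
        by_contra hmem'
        rw [if_neg hmem'] at e2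
        omega
      · intro hmem
        rw [if_pos hmem] at e2
        by_contra hmem'
        rw [if_neg hmem'] at e1
        omega
  exact ⟨hsgeq, hbeq⟩

end Geometry5
end TCProof
namespace TCProof
open Set Complex Equiv

section Final

variable {n : ℕ} (hn : 2 ≤ n)

/-- index type of the pieces in the `r`-th categorical family -/
def PIdx (r : Fin (n-1)) : Type :=
  {sb : Equiv.Perm (Fin n) × Finset (Fin n) //
    (⟨0, by omega⟩ : Fin n) ∈ sb.2 ∧ sb.2.card = r.1 + 2}

lemma mhat_motion_cover : HasMotionCover (Mhat hn) (2*n - 3) := by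
  classical
  -- the categorical cover of Mhat by n-1 families
  have hz : (0:ℕ) < n := by omega
  set U : Fin (n-1) → Set (Mhat hn) :=
    fun r => ⋃ pc : PIdx hn r, PieceSet hn pc.1.1 pc.1.2 with hU
  have hop : ∀ r, IsOpen (U r) := fun r => isOpen_iUnion fun pc => pieceSet_open hn _ _
  have hcov : (⋃ r, U r) = Set.univ := by
    rw [Set.eq_univ_iff_forall]
    intro x
    obtain ⟨sg, b, h0b, hc2, hcn, hcond⟩ := cover_exists hn x
    have hr : b.card - 2 < n - 1 := by omega
    refine Set.mem_iUnion.mpr ⟨⟨b.card - 2, hr⟩, ?_⟩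
    rw [hU]
    refine Set.mem_iUnion.mpr ⟨⟨(sg, b), h0b, by show b.card = b.card - 2 + 2; omega⟩, hcond⟩
  have hdec : ∀ r, ∃ (ι : Type) (V : ι → Set (Mhat hn)), (∀ t, IsOpen (V t)) ∧
      (∀ t t', t ≠ t' → Disjoint (V t) (V t')) ∧
      (∀ t, Contr (Mhat hn) (basept hn) (V t)) ∧ (⋃ t, V t) = U r := by
    intro r
    refine ⟨PIdx hn r, fun pc => PieceSet hn pc.1.1 pc.1.2,
      fun pc => pieceSet_open hn _ _, ?_, fun pc => piece_contr hn _ _, rfl⟩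
    intro pc pc' hne
    apply Set.disjoint_left.mpr
    intro x hx hx'
    have hcards : pc.1.2.card = pc'.1.2.card := by rw [pc.2.2, pc'.2.2]
    obtain ⟨hsg, hb⟩ := piece_unique hn pc.2.1 pc'.2.1 hcards hx hx'
    exact hne (Subtype.ext (Prod.ext hsg hb))
  have hfam := thresh (fun A B hAB hQ => hQ.mono hAB) U hop hcov hdec (2*n - 3)
  have hmult : (2*n - 3) - ((n-1) - 1) = n - 1 := by omega
  rw [hmult] at hfam
  apply combine (Homeomorph.refl (Mhat hn × Mhat hn)) hfam hfam (by omega)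
  intro A B _ _ hA hB
  have : (Homeomorph.refl (Mhat hn × Mhat hn)) ⁻¹' (A ×ˢ B) = A ×ˢ B := by
    simp
  rw [this]
  exact secSet_prod_of_contr hA hB

lemma y_motion_cover : HasMotionCover (ℂ × Mhat hn) (2*n - 3) := by
  classical
  obtain ⟨U, hop, hcov, hsec⟩ := mhat_motion_cover hn
  have hdec : ∀ i, ∃ (ι : Type) (V : ι → Set (Mhat hn × Mhat hn)), (∀ t, IsOpen (V t)) ∧
      (∀ t t', t ≠ t' → Disjoint (V t) (V t')) ∧
      (∀ t, SecSet (Mhat hn) (V t)) ∧ (⋃ t, V t) = U i := by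
    intro i
    exact ⟨PUnit, fun _ => U i, fun _ => hop i, fun t t' h => absurd rfl h,
      fun _ => hsec i, Set.iUnion_const _⟩
  have hfam := thresh (fun A B hAB hQ => hQ.mono hAB) U hop hcov hdec (2*n - 3)
  have hmult : 1 ≤ (2*n - 3) - ((2*n - 3) - 1) := by omega
  apply combine (pairSwap (Homeomorph.refl (ℂ × Mhat hn)))
    (univ_pieceFam_C (2*n-3)) hfam (by omega)
  intro A B _ _ hA hB
  exact secSet_pairSwap_prod _ hA hB

/-- the splitting homeomorphism -/
noncomputable def bigHomeo : ConfC n ≃ₜ Cx × (ℂ × Mhat hn) where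
  toFun x := (⟨x.1 (ii1 hn) - x.1 (ii0 hn), sub_ne_zero.mpr (fun h => (ii_ne hn) (x.2 h.symm))⟩,
    (x.1 (ii0 hn),
     ⟨rnorm hn x.1, (rnorm_mem hn x.2).1, (rnorm_mem hn x.2).2.1, (rnorm_mem hn x.2).2.2⟩))
  invFun z := ⟨fun i => z.2.1 + z.1.1 * z.2.2.1 i, by
    intro i j hij
    apply z.2.2.2.1
    have h1 : z.1.1 * z.2.2.1 i = z.1.1 * z.2.2.1 j := by
      have := hij
      dsimp only at this
      linear_combination this
    exact mul_left_cancel₀ z.1.2 h1⟩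
  left_inv x := by
    apply Subtype.ext
    funext i
    show x.1 (ii0 hn) + (x.1 (ii1 hn) - x.1 (ii0 hn)) * rnorm hn x.1 i = x.1 i
    rw [rnorm]
    rw [mul_div_cancel₀ _ (rnorm_den_ne hn x.2)]
    ring
  right_inv z := by
    obtain ⟨⟨l, hl⟩, c, y⟩ := z
    refine Prod.ext (Subtype.ext ?_) (Prod.ext ?_ (Subtype.ext ?_))
    · show (c + l * y.1 (ii1 hn)) - (c + l * y.1 (ii0 hn)) = l
      rw [y.2.2.1, y.2.2.2]
      ring
    · show c + l * y.1 (ii0 hn) = c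
      rw [y.2.2.1]
      ring
    · funext i
      show ((c + l * y.1 i) - (c + l * y.1 (ii0 hn))) / ((c + l * y.1 (ii1 hn)) - (c + l * y.1 (ii0 hn))) = y.1 i
      rw [y.2.2.1, y.2.2.2]
      simp only [mul_zero, add_zero, mul_one, add_sub_cancel_left]
      exact mul_div_cancel_left₀ _ hl
  continuous_toFun := by
    have hev : ∀ i : Fin n, Continuous fun x : ConfC n => x.1 i :=
      fun i => (continuous_apply i).comp continuous_subtype_val
    refine Continuous.prodMk (Continuous.subtype_mk ((hev _).sub (hev _)) _) ?_
    refine Continuous.prodMk (hev _) (Continuous.subtype_mk ?_ _)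
    apply continuous_pi
    intro i
    exact ((hev i).sub (hev _)).div ((hev _).sub (hev _))
      (fun x => rnorm_den_ne hn x.2)
  continuous_invFun := by
    apply Continuous.subtype_mk
    apply continuous_pi
    intro i
    have h1 : Continuous fun z : Cx × (ℂ × Mhat hn) => z.2.1 :=
      continuous_fst.comp continuous_snd
    have h2 : Continuous fun z : Cx × (ℂ × Mhat hn) => (z.1 : ℂ) :=
      continuous_subtype_val.comp continuous_fst
    have h3 : Continuous fun z : Cx × (ℂ × Mhat hn) => z.2.2.1 i :=
      (continuous_apply i).comp (continuous_subtype_val.comp (continuous_snd.comp continuous_snd))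
    exact h1.add (h2.mul h3)

include hn in
lemma confC_motion_cover : HasMotionCover (ConfC n) (2*n - 2) := by
  classical
  obtain ⟨U, hop, hcov, hsec⟩ := y_motion_cover hn
  have hdec : ∀ i, ∃ (ι : Type) (V : ι → Set ((ℂ × Mhat hn) × (ℂ × Mhat hn))),
      (∀ t, IsOpen (V t)) ∧
      (∀ t t', t ≠ t' → Disjoint (V t) (V t')) ∧
      (∀ t, SecSet (ℂ × Mhat hn) (V t)) ∧ (⋃ t, V t) = U i := by
    intro i
    exact ⟨PUnit, fun _ => U i, fun _ => hop i, fun t t' h => absurd rfl h,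
      fun _ => hsec i, Set.iUnion_const _⟩
  have hfam := thresh (fun A B hAB hQ => hQ.mono hAB) U hop hcov hdec (2*n - 2)
  have hmult : (2*n - 2) - ((2*n - 3) - 1) = 2 := by omega
  rw [hmult] at hfam
  apply combine (pairSwap (bigHomeo hn)) (dir_pieceFam (2*n-2)) hfam (by omega)
  intro A B _ _ hA hB
  exact secSet_pairSwap_prod _ hA hB

end Final
end TCProof

/-- for `n ≥ 2`, `TC(F(ℂ, n)) ≤ 2n - 2`. -/
theorem tc_confC_le (n : ℕ) (hn : 2 ≤ n) :
    topologicalComplexity (ConfC n) ≤ 2 * n - 2 := by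
  have h := TCProof.confC_motion_cover hn
  have hmem : ((2*n - 2 : ℕ) : ℕ∞) ∈ ((↑) '' {k : ℕ | HasMotionCover (ConfC n) k}) :=
    ⟨2*n - 2, h, rfl⟩
  have hle : topologicalComplexity (ConfC n) ≤ ((2*n - 2 : ℕ) : ℕ∞) := sInf_le hmem
  have hcast : ((2*n - 2 : ℕ) : ℕ∞) = 2 * (n : ℕ∞) - 2 := by
    push_cast
    rfl
  rwa [hcast] at hle
end
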